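/- arXiv:2109.01030 — 4 statements merged into one kernel-verified Lean document; each statement's English description precedes it below -/
import Mathlib

section
/- Let f : ℝ → ℝ be a bounded probability density function (f ≥ 0, ∫_ℝ f = 1) with finite first and second moments, i.e. ∫_ℝ |x| f(x) dx < ∞ and ∫_ℝ x² f(x) dx < ∞. Then f is COS-admissible. -/
open MeasureTheory Real Filter

/-- `cosB f L` is the quantity `B(L)` from the definition of COS-admissibility. -/
noncomputable def cosB (f : ℝ → ℝ) (L : ℝ) : ℝ :=
  ∑' k : ℕ, (1 / L) *
    |∫ x in (Set.Icc (-L) L)ᶜ, f x * Real.cos (k * π * (x + L) / (2 * L))| ^ 2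

/-- `f` is COS-admissible if `B(L) → 0` as `L → ∞`. -/
def COSAdmissible (f : ℝ → ℝ) : Prop :=
  Tendsto (cosB f) atTop (nhds 0)


lemma integral_cos_period {L : ℝ} (a c d : ℝ) (n : ℤ) (hc : c ≠ 0)
    (hn : c * (4*L) = n * (2*π)) :
    ∫ x in a..(a+4*L), Real.cos (c*x + d) = 0 := by
  rw [intervalIntegral.integral_comp_mul_add Real.cos hc d, integral_cos]
  have h : c*(a+4*L)+d = (c*a+d) + n*(2*π) := by rw [← hn]; ring
  rw [h, Real.sin_add_int_mul_two_pi, sub_self, smul_zero]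

lemma cos_mul_cos_eq (X Y : ℝ) :
    Real.cos X * Real.cos Y = (1/2) * Real.cos (X+Y) + (1/2) * Real.cos (X-Y) := by
  rw [Real.cos_add, Real.cos_sub]; ring

lemma orth {L : ℝ} (hL : 0 < L) (k j : ℕ) (a : ℝ) :
    ∫ x in a..(a+4*L), Real.cos ((k:ℝ) * π * (x + L) / (2 * L)) * Real.cos ((j:ℝ) * π * (x + L) / (2 * L))
    = if k = j then (if k = 0 then 4*L else 2*L) else 0 := by
  have hLne : L ≠ 0 := ne_of_gt hL
  have harg : ∀ (i : ℕ) (x : ℝ), (i:ℝ) * π * (x + L) / (2 * L) = ((i:ℝ)*π/(2*L)) * x + (i:ℝ)*π/2 := by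
    intro i x; field_simp
  have hcontc : ∀ c d : ℝ, Continuous (fun x : ℝ => (1/2) * Real.cos (c*x + d)) :=
    fun c d => continuous_const.mul (Real.continuous_cos.comp
      ((continuous_const.mul continuous_id).add continuous_const))
  have hper' : ∀ r : ℝ, (r*π/(2*L)) * (4*L) = r*(2*π) := by
    intro r; field_simp; ring
  by_cases hkj : k = j
  · subst hkj
    by_cases hk : k = 0
    · subst hk
      simp only [Nat.cast_zero, zero_mul, zero_div, Real.cos_zero, one_mul]
      simp [intervalIntegral.integral_const]
    · simp only [if_pos rfl, if_neg hk]
      have hc : ((k:ℝ)*π/(2*L)) ≠ 0 := by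
        have : (k:ℝ) ≠ 0 := Nat.cast_ne_zero.mpr hk
        positivity
      have heq : ∀ x : ℝ, Real.cos ((k:ℝ) * π * (x + L) / (2 * L)) * Real.cos ((k:ℝ) * π * (x + L) / (2 * L))
          = 1/2 + (1/2) * Real.cos ((2*((k:ℝ)*π/(2*L))) * x + 2*((k:ℝ)*π/2)) := by
        intro x
        rw [harg k x, ← sq, Real.cos_sq]
        ring_nf
      rw [intervalIntegral.integral_congr (fun x _ => heq x)]
      rw [intervalIntegral.integral_add ((continuous_const).intervalIntegrable _ _)
        ((hcontc _ _).intervalIntegrable _ _)]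
      rw [intervalIntegral.integral_const_mul]
      rw [integral_cos_period a _ _ (2*(k:ℤ)) (by simpa using mul_ne_zero two_ne_zero hc)
        (by rw [show (2*((k:ℝ)*π/(2*L))) = ((2*(k:ℝ))*π/(2*L)) by ring, hper' (2*(k:ℝ))]; push_cast; ring)]
      simp [intervalIntegral.integral_const]
      ring
  · have hkR : (k:ℝ) ≠ (j:ℝ) := by exact_mod_cast hkj
    have e1 : ∀ x : ℝ, ((k:ℝ)*π/(2*L)) * x + (k:ℝ)*π/2 + (((j:ℝ)*π/(2*L)) * x + (j:ℝ)*π/2)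
        = (((k:ℝ)+j)*π/(2*L)) * x + ((k:ℝ)+j)*π/2 := by
      intro x; ring
    have e2 : ∀ x : ℝ, ((k:ℝ)*π/(2*L)) * x + (k:ℝ)*π/2 - (((j:ℝ)*π/(2*L)) * x + (j:ℝ)*π/2)
        = (((k:ℝ)-j)*π/(2*L)) * x + ((k:ℝ)-j)*π/2 := by
      intro x; ring
    have heq : ∀ x : ℝ, Real.cos ((k:ℝ) * π * (x + L) / (2 * L)) * Real.cos ((j:ℝ) * π * (x + L) / (2 * L))
        = (1/2) * Real.cos ((((k:ℝ)+j)*π/(2*L)) * x + ((k:ℝ)+j)*π/2)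
          + (1/2) * Real.cos ((((k:ℝ)-j)*π/(2*L)) * x + ((k:ℝ)-j)*π/2) := by
      intro x
      rw [harg k x, harg j x, cos_mul_cos_eq, e1 x, e2 x]
    have h1 : ((k:ℝ)+j) ≠ 0 := by
      have h : k + j ≠ 0 := by omega
      have : ((k+j : ℕ):ℝ) ≠ 0 := Nat.cast_ne_zero.mpr h
      push_cast at this; exact this
    have hc1 : (((k:ℝ)+j)*π/(2*L)) ≠ 0 := by
      have hπ := Real.pi_ne_zero
      have hL2 : (2*L) ≠ 0 := by positivity
      exact div_ne_zero (mul_ne_zero h1 hπ) hL2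
    have hc2 : (((k:ℝ)-j)*π/(2*L)) ≠ 0 := by
      have h1 : (k:ℝ)-j ≠ 0 := sub_ne_zero.mpr hkR
      have hπ := Real.pi_ne_zero
      have hL2 : (2*L) ≠ 0 := by positivity
      exact div_ne_zero (mul_ne_zero h1 hπ) hL2
    rw [intervalIntegral.integral_congr (fun x _ => heq x)]
    rw [intervalIntegral.integral_add ((hcontc _ _).intervalIntegrable _ _)
      ((hcontc _ _).intervalIntegrable _ _)]
    rw [intervalIntegral.integral_const_mul, intervalIntegral.integral_const_mul]
    rw [integral_cos_period a _ _ ((k:ℤ)+j) hc1 (by rw [hper' ((k:ℝ)+j)]; push_cast; ring),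
        integral_cos_period a _ _ ((k:ℤ)-j) hc2 (by rw [hper' ((k:ℝ)-j)]; push_cast; ring)]
    simp [if_neg hkj]

lemma bessel_finset {α : Type*} [MeasurableSpace α] {μ : Measure α} {g : α → ℝ} {e : ℕ → α → ℝ}
    {n : ℕ → ℝ}
    (hg2 : Integrable (fun x => g x ^ 2) μ)
    (hge : ∀ k, Integrable (fun x => g x * e k x) μ)
    (hee : ∀ k j, Integrable (fun x => e k x * e j x) μ)
    (horth : ∀ k j, ∫ x, e k x * e j x ∂μ = if k = j then n k else 0)
    (hn : ∀ k, 0 < n k) (F : Finset ℕ) :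
    ∑ k ∈ F, (∫ x, g x * e k x ∂μ) ^ 2 / n k ≤ ∫ x, g x ^ 2 ∂μ := by
  set c : ℕ → ℝ := fun k => ∫ x, g x * e k x ∂μ with hc
  set s : α → ℝ := fun x => ∑ k ∈ F, (c k / n k) * e k x with hs
  -- integrability of pieces
  have hgs : Integrable (fun x => g x * s x) μ := by
    have : (fun x => g x * s x) = fun x => ∑ k ∈ F, (c k / n k) * (g x * e k x) := by
      funext x; rw [hs]; simp only [Finset.mul_sum]; apply Finset.sum_congr rfl; intros; ring
    rw [this]
    exact integrable_finset_sum F (fun k _ => (hge k).const_mul _)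
  have hss : Integrable (fun x => s x ^ 2) μ := by
    have : (fun x => s x ^ 2) = fun x => ∑ k ∈ F, ∑ j ∈ F, ((c k / n k) * (c j / n j)) * (e k x * e j x) := by
      funext x; rw [hs, sq, Finset.sum_mul_sum]
      apply Finset.sum_congr rfl; intros k _; apply Finset.sum_congr rfl; intros j _; ring
    rw [this]
    exact integrable_finset_sum F (fun k _ => integrable_finset_sum F (fun j _ => (hee k j).const_mul _))
  -- compute ∫ g * s
  have hgs_val : ∫ x, g x * s x ∂μ = ∑ k ∈ F, c k ^ 2 / n k := by
    have h1 : (fun x => g x * s x) = fun x => ∑ k ∈ F, (c k / n k) * (g x * e k x) := by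
      funext x; rw [hs]; simp only [Finset.mul_sum]; apply Finset.sum_congr rfl; intros; ring
    rw [h1, integral_finset_sum F (fun k _ => (hge k).const_mul _)]
    apply Finset.sum_congr rfl; intro k _
    rw [integral_const_mul]
    show c k / n k * c k = _
    ring
  -- compute ∫ s^2
  have hss_val : ∫ x, s x ^ 2 ∂μ = ∑ k ∈ F, c k ^ 2 / n k := by
    have h1 : (fun x => s x ^ 2) = fun x => ∑ k ∈ F, ∑ j ∈ F, ((c k / n k) * (c j / n j)) * (e k x * e j x) := by
      funext x; rw [hs, sq, Finset.sum_mul_sum]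
      apply Finset.sum_congr rfl; intros k _; apply Finset.sum_congr rfl; intros j _; ring
    rw [h1, integral_finset_sum F (fun k _ => integrable_finset_sum F (fun j _ => (hee k j).const_mul _))]
    have h2 : ∀ k ∈ F, (∫ x, ∑ j ∈ F, ((c k / n k) * (c j / n j)) * (e k x * e j x) ∂μ) = c k ^ 2 / n k := by
      intro k hk
      rw [integral_finset_sum F (fun j _ => (hee k j).const_mul _)]
      have h3 : ∀ j ∈ F, (∫ x, ((c k / n k) * (c j / n j)) * (e k x * e j x) ∂μ)
          = if k = j then c k ^ 2 / n k else 0 := by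
        intro j _
        rw [integral_const_mul, horth k j]
        by_cases hkj : k = j
        · subst hkj; rw [if_pos rfl, if_pos rfl]
          have h0 : n k ≠ 0 := (hn k).ne'
          field_simp
        · rw [if_neg hkj, if_neg hkj, mul_zero]
      rw [Finset.sum_congr rfl h3, Finset.sum_ite_eq F k (fun _ => c k ^2 / n k), if_pos hk]
    exact Finset.sum_congr rfl h2
  -- expand the square
  have hexp : 0 ≤ ∫ x, (g x - s x) ^ 2 ∂μ := integral_nonneg (fun x => sq_nonneg _)
  have hsplit : ∫ x, (g x - s x) ^ 2 ∂μ
      = ∫ x, g x ^ 2 ∂μ - 2 * ∑ k ∈ F, c k ^ 2 / n k + ∑ k ∈ F, c k ^ 2 / n k := by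
    have h1 : (fun x => (g x - s x) ^ 2) = fun x => g x ^ 2 - 2 * (g x * s x) + s x ^ 2 := by
      funext x; ring
    rw [h1, integral_add (by exact (hg2.sub (hgs.const_mul 2))) hss,
        integral_sub hg2 (hgs.const_mul 2), integral_const_mul, hgs_val, hss_val]
  nlinarith [hexp, hsplit]

lemma summable_w_inv : Summable (fun m : ℤ => ((1:ℝ) + (m:ℝ)^2)⁻¹) := by
  have hnat : Summable (fun n : ℕ => ((1:ℝ) + (n:ℝ)^2)⁻¹) := by
    have h2 : Summable (fun n : ℕ => (1:ℝ)/n^2) := Real.summable_one_div_nat_pow.mpr one_lt_two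
    have h3 : Summable (fun n : ℕ => (1:ℝ)/(n+1)^2) := by
      exact_mod_cast (summable_nat_add_iff 1).mpr h2
    apply Summable.of_nonneg_of_le (fun n => by positivity) (fun n => ?_) (h3.mul_left 2)
    rw [mul_one_div, inv_eq_one_div, div_le_div_iff₀ (by positivity) (by positivity)]
    nlinarith [sq_nonneg ((n:ℝ)-1)]
  apply Summable.of_nat_of_neg
  · exact_mod_cast hnat
  · convert hnat using 2 with n
    rfl
    push_cast; ring
lemma tsum_sq_le_weighted (a : ℤ → ℝ) (w : ℤ → ℝ) (hw : ∀ m, 0 < w m)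
    (ha : Summable a)
    (hwa : Summable (fun m => w m * a m ^ 2))
    (hwi : Summable (fun m => (w m)⁻¹)) :
    (∑' m, a m) ^ 2 ≤ (∑' m, (w m)⁻¹) * ∑' m, w m * a m ^ 2 := by
  set W := ∑' m, (w m)⁻¹ with hW
  set S := ∑' m, w m * a m ^ 2 with hS
  have hW0 : 0 ≤ W := tsum_nonneg (fun m => inv_nonneg.mpr (hw m).le)
  have hS0 : 0 ≤ S := tsum_nonneg (fun m => mul_nonneg (hw m).le (sq_nonneg _))
  have key : ∀ s : Finset ℤ, ∑ m ∈ s, |a m| ≤ Real.sqrt (W * S) := by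
    intro s
    have h1 : (∑ m ∈ s, |a m|) ^ 2 ≤ (∑ m ∈ s, (w m)⁻¹) * (∑ m ∈ s, w m * a m ^ 2) := by
      have hcs := Finset.sum_mul_sq_le_sq_mul_sq s (fun m => Real.sqrt (w m)⁻¹)
        (fun m => Real.sqrt (w m) * |a m|)
      have e1 : ∀ m, Real.sqrt (w m)⁻¹ * (Real.sqrt (w m) * |a m|) = |a m| := by
        intro m
        rw [← mul_assoc, ← Real.sqrt_mul (inv_nonneg.mpr (hw m).le), inv_mul_cancel₀ (hw m).ne',
          Real.sqrt_one, one_mul]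
      have e2 : ∀ m, (Real.sqrt (w m)⁻¹) ^ 2 = (w m)⁻¹ := fun m => Real.sq_sqrt (inv_nonneg.mpr (hw m).le)
      have e3 : ∀ m, (Real.sqrt (w m) * |a m|) ^ 2 = w m * a m ^ 2 := by
        intro m; rw [mul_pow, Real.sq_sqrt (hw m).le, sq_abs]
      simp only [e1, e2, e3] at hcs
      exact hcs
    have h2 : (∑ m ∈ s, |a m|) ^ 2 ≤ W * S := by
      refine h1.trans (mul_le_mul ?_ ?_ ?_ hW0)
      · exact Summable.sum_le_tsum s (fun m _ => inv_nonneg.mpr (hw m).le) hwi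
      · exact Summable.sum_le_tsum s (fun m _ => mul_nonneg (hw m).le (sq_nonneg _)) hwa
      · exact Finset.sum_nonneg (fun m _ => mul_nonneg (hw m).le (sq_nonneg _))
    have h3 : 0 ≤ ∑ m ∈ s, |a m| := Finset.sum_nonneg (fun m _ => abs_nonneg _)
    rw [Real.le_sqrt h3 (mul_nonneg hW0 hS0)]
    exact h2
  have habs : Summable (fun m => |a m|) := ha.abs
  have h4 : ∑' m, |a m| ≤ Real.sqrt (W * S) := Summable.tsum_le_of_sum_le habs key
  have h5 : |∑' m, a m| ≤ ∑' m, |a m| := by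
    simpa [Real.norm_eq_abs] using norm_tsum_le_tsum_norm (f := a) (by simpa [Real.norm_eq_abs] using habs)
  calc (∑' m, a m) ^ 2 = |∑' m, a m| ^ 2 := (sq_abs _).symm
    _ ≤ Real.sqrt (W * S) ^ 2 := by
        apply pow_le_pow_left₀ (abs_nonneg _) (h5.trans h4)
    _ = W * S := Real.sq_sqrt (mul_nonneg hW0 hS0)

lemma Jm_mem_iff {L : ℝ} (hL : 0 < L) (m : ℤ) (x : ℝ) :
    x ∈ Set.Ico (4*L*m - L) (4*L*m + 3*L) ↔ ⌊(x+L)/(4*L)⌋ = m := by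
  rw [Int.floor_eq_iff, Set.mem_Ico]
  have h4L : (0:ℝ) < 4*L := by linarith
  constructor
  · rintro ⟨h1, h2⟩
    constructor
    · rw [le_div_iff₀ h4L]; linarith
    · rw [div_lt_iff₀ h4L]; push_cast; linarith
  · rintro ⟨h1, h2⟩
    rw [le_div_iff₀ h4L] at h1
    rw [div_lt_iff₀ h4L] at h2
    push_cast at h2
    constructor <;> linarith

lemma Jm_disjoint {L : ℝ} (hL : 0 < L) :
    Pairwise (Function.onFun Disjoint (fun m : ℤ => Set.Ico (4*L*m - L) (4*L*m + 3*L))) := by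
  intro m m' hmm'
  simp only [Function.onFun, Set.disjoint_left]
  intro x hx hx'
  rw [Jm_mem_iff hL] at hx hx'
  exact hmm' (hx.symm.trans hx')

lemma Jm_union {L : ℝ} (hL : 0 < L) :
    (⋃ m : ℤ, Set.Ico (4*L*m - L) (4*L*m + 3*L)) = Set.univ := by
  ext x
  simp only [Set.mem_iUnion, Set.mem_univ, iff_true]
  exact ⟨⌊(x+L)/(4*L)⌋, (Jm_mem_iff hL _ x).mpr rfl⟩

-- geometric: on Jm, m²L² ≤ x²
lemma Jm_sq_le {L : ℝ} (hL : 0 < L) {m : ℤ} {x : ℝ}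
    (hx : x ∈ Set.Ico (4*L*m - L) (4*L*m + 3*L)) : ((m:ℝ))^2 * L^2 ≤ x^2 := by
  obtain ⟨h1, h2⟩ := hx
  rcases lt_trichotomy m 0 with hm | hm | hm
  · have hm1 : (m:ℝ) ≤ -1 := by exact_mod_cast (show m ≤ -1 by omega)
    have hx1 : -x ≥ L*(-(m:ℝ)) := by nlinarith
    have hpos : (0:ℝ) ≤ L*(-(m:ℝ)) := by nlinarith
    have := pow_le_pow_left₀ hpos hx1.le 2
    calc ((m:ℝ))^2 * L^2 = (L*(-(m:ℝ)))^2 := by ring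
      _ ≤ (-x)^2 := this
      _ = x^2 := by ring
  · subst hm; simpa using sq_nonneg x
  · have hm1 : (1:ℝ) ≤ m := by exact_mod_cast hm
    have hx1 : L*(m:ℝ) ≤ x := by nlinarith
    have hpos : (0:ℝ) ≤ L*(m:ℝ) := by nlinarith
    have := pow_le_pow_left₀ hpos hx1 2
    calc ((m:ℝ))^2 * L^2 = (L*(m:ℝ))^2 := by ring
      _ ≤ x^2 := this


theorem stmt_1 (f : ℝ → ℝ) (C : ℝ)
    (hbdd : ∀ x, f x ≤ C)                     -- `f` is bounded
    (hnonneg : ∀ x, 0 ≤ f x)                  -- `f` is a probability density: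
    (hint : Integrable f)
    (hone : ∫ x, f x = 1)
    (hmom1 : Integrable (fun x => |x| * f x)) -- finite first moment
    (hmom2 : Integrable (fun x => x ^ 2 * f x)) -- finite second moment
    : COSAdmissible f := by
  classical
  have hC : 0 ≤ C := le_trans (hnonneg 0) (hbdd 0)
  have hWsum : Summable (fun m : ℤ => ((1:ℝ) + (m:ℝ)^2)⁻¹) := summable_w_inv
  set W : ℝ := ∑' m : ℤ, ((1:ℝ) + (m:ℝ)^2)⁻¹ with hWdef
  have hW0 : 0 ≤ W := tsum_nonneg (fun m => by positivity)
  set M2 : ℝ := ∫ x, x^2 * f x with hM2def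
  have hM2 : 0 ≤ M2 := integral_nonneg (fun x => mul_nonneg (sq_nonneg x) (hnonneg x))
  have hK : 0 ≤ 8*C*W*M2 := by positivity
  have key : ∀ L : ℝ, 0 < L → cosB f L ≤ (8*C*W*M2) / L^2 := by
    intro L hL
    have hLne : L ≠ 0 := hL.ne'
    set S : Set ℝ := (Set.Icc (-L) L)ᶜ with hSdef
    have hSmeas : MeasurableSet S := measurableSet_Icc.compl
    set g : ℝ → ℝ := S.indicator f with hgdef
    have hg_meas : AEStronglyMeasurable g volume := hint.aestronglyMeasurable.indicator hSmeas
    have hg_int : Integrable g := hint.indicator hSmeas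
    have hg_nonneg : ∀ x, 0 ≤ g x := fun x => Set.indicator_nonneg (fun y _ => hnonneg y) x
    have hg_le_C : ∀ x, g x ≤ C := by
      intro x
      rw [hgdef, Set.indicator_apply]
      split
      · exact hbdd x
      · exact hC
    have hSx : ∀ x ∈ S, L^2 ≤ x^2 := by
      intro x hx
      rw [hSdef, Set.mem_compl_iff, Set.mem_Icc, not_and_or, not_le, not_le] at hx
      rcases hx with hx | hx <;> nlinarith
    -- the cosine system
    set e : ℕ → ℝ → ℝ := fun k x => Real.cos ((k:ℝ) * π * (x + L) / (2 * L)) with hedef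
    have he_cont : ∀ k, Continuous (e k) := by
      intro k
      exact Real.continuous_cos.comp ((continuous_const.mul (continuous_id.add continuous_const)).div_const _)
    have he_bd : ∀ k x, |e k x| ≤ 1 := fun k x => Real.abs_cos_le_one _
    have hge_int : ∀ k, Integrable (fun x => g x * e k x) := by
      intro k
      refine Integrable.mono' hg_int (hg_meas.mul (he_cont k).aestronglyMeasurable) (ae_of_all _ fun x => ?_)
      rw [norm_mul, Real.norm_eq_abs, Real.norm_eq_abs, abs_of_nonneg (hg_nonneg x)]
      calc g x * |e k x| ≤ g x * 1 := mul_le_mul_of_nonneg_left (he_bd k x) (hg_nonneg x)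
        _ = g x := mul_one _
    have hc_eq : ∀ k, (∫ x in S, f x * e k x) = ∫ x, g x * e k x := by
      intro k
      rw [← integral_indicator hSmeas]
      congr 1
      funext x
      rw [hgdef]
      by_cases hx : x ∈ S
      · rw [Set.indicator_of_mem hx, Set.indicator_of_mem hx]
      · rw [Set.indicator_of_notMem hx, Set.indicator_of_notMem hx, zero_mul]
    -- the blocks
    set J : ℤ → Set ℝ := fun m => Set.Ico (4*L*m - L) (4*L*m + 3*L) with hJdef
    have hJmeas : ∀ m, MeasurableSet (J m) := fun m => measurableSet_Ico
    have hJdisj : Pairwise (Function.onFun Disjoint J) := Jm_disjoint hL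
    have hJunion : (⋃ m : ℤ, J m) = Set.univ := Jm_union hL
    have hJfin : ∀ m, volume (J m) < ⊤ := fun m => measure_Ico_lt_top
    set ckm : ℤ → ℕ → ℝ := fun m k => ∫ x in J m, g x * e k x with hckm
    have hHasSum : ∀ k, HasSum (fun m => ckm m k) (∫ x, g x * e k x) := by
      intro k
      have h := hasSum_integral_iUnion (μ := volume) hJmeas hJdisj
        ((hge_int k).integrableOn (s := ⋃ m, J m))
      rwa [hJunion, setIntegral_univ] at h
    set Tm : ℤ → ℝ := fun m => ∫ x in J m, g x with hTm
    have hTm_hasSum : HasSum Tm (∫ x, g x) := by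
      have h := hasSum_integral_iUnion (μ := volume) hJmeas hJdisj
        (hg_int.integrableOn (s := ⋃ m, J m))
      rwa [hJunion, setIntegral_univ] at h
    have hTm_nonneg : ∀ m, 0 ≤ Tm m := fun m =>
      setIntegral_nonneg (hJmeas m) (fun x _ => hg_nonneg x)
    have hT_le : (∫ x, g x) ≤ M2 / L^2 := by
      have hpt : ∀ x, g x ≤ (x^2 * f x)/L^2 := by
        intro x
        rw [hgdef, Set.indicator_apply]
        split
        · rename_i hx
          rw [le_div_iff₀ (by positivity)]
          have := hSx x hx
          nlinarith [hnonneg x]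
        · exact div_nonneg (mul_nonneg (sq_nonneg x) (hnonneg x)) (by positivity)
      calc (∫ x, g x) ≤ ∫ x, (x^2 * f x)/L^2 := integral_mono hg_int (hmom2.div_const _) hpt
        _ = M2 / L^2 := by rw [integral_div]
    set gU : ℝ → ℝ := S.indicator (fun x => x^2 * f x) with hgUdef
    have hgU_int : Integrable gU := hmom2.indicator hSmeas
    set Um : ℤ → ℝ := fun m => ∫ x in J m, gU x with hUm
    have hUm_hasSum : HasSum Um (∫ x, gU x) := by
      have h := hasSum_integral_iUnion (μ := volume) hJmeas hJdisj
        (hgU_int.integrableOn (s := ⋃ m, J m))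
      rwa [hJunion, setIntegral_univ] at h
    have hU_le : (∫ x, gU x) ≤ M2 := by
      refine integral_mono hgU_int hmom2 ?_
      intro x
      rw [hgUdef, Set.indicator_apply]
      split
      · exact le_rfl
      · exact mul_nonneg (sq_nonneg x) (hnonneg x)
    have hm2Tm : ∀ m : ℤ, ((m:ℝ))^2 * Tm m ≤ Um m / L^2 := by
      intro m
      have h1 : ((m:ℝ))^2 * Tm m = ∫ x in J m, ((m:ℝ))^2 * g x := by
        rw [hTm]; exact (integral_const_mul _ _).symm
      rw [h1, hUm, ← integral_div]
      refine setIntegral_mono_on ((hg_int.const_mul _).integrableOn)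
        ((hgU_int.div_const _).integrableOn) (hJmeas m) ?_
      intro x hx
      have hsq := Jm_sq_le hL (hJdef ▸ hx)
      rw [hgdef, hgUdef, Set.indicator_apply, Set.indicator_apply]
      split
      · rw [le_div_iff₀ (by positivity)]
        nlinarith [hnonneg x]
      · simp
    have hsum_wTm : Summable (fun m : ℤ => (1+(m:ℝ)^2) * Tm m) := by
      refine Summable.of_nonneg_of_le
        (fun m => mul_nonneg (by positivity) (hTm_nonneg m))
        (fun m => ?_) (hTm_hasSum.summable.add (hUm_hasSum.summable.div_const (L^2)))
      have := hm2Tm m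
      nlinarith [hTm_nonneg m]
    have htsum_wTm : ∑' m : ℤ, (1+(m:ℝ)^2) * Tm m ≤ 2*M2/L^2 := by
      have h1 : ∑' m : ℤ, (1+(m:ℝ)^2) * Tm m ≤ ∑' m : ℤ, (Tm m + Um m / L^2) := by
        refine Summable.tsum_le_tsum (fun m => ?_) hsum_wTm
          (hTm_hasSum.summable.add (hUm_hasSum.summable.div_const (L^2)))
        have := hm2Tm m
        nlinarith [hTm_nonneg m]
      have h2 : ∑' m : ℤ, (Tm m + Um m / L^2) = (∫ x, g x) + (∫ x, gU x)/L^2 := by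
        rw [Summable.tsum_add hTm_hasSum.summable (hUm_hasSum.summable.div_const (L^2)),
          hTm_hasSum.tsum_eq, tsum_div_const, hUm_hasSum.tsum_eq]
      have h3 : (∫ x, g x) + (∫ x, gU x)/L^2 ≤ M2/L^2 + M2/L^2 :=
        add_le_add hT_le ((div_le_div_iff_of_pos_right (by positivity)).mpr hU_le)
      calc ∑' m : ℤ, (1+(m:ℝ)^2) * Tm m ≤ (∫ x, g x) + (∫ x, gU x)/L^2 := h2 ▸ h1
        _ ≤ M2/L^2 + M2/L^2 := h3
        _ = 2*M2/L^2 := by ring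
    -- integrability for Bessel
    have hg2_int : Integrable (fun x => g x ^ 2) := by
      have hmeq : (fun x => g x ^ 2) = fun x => g x * g x := by funext x; rw [sq]
      refine Integrable.mono' (hg_int.const_mul C) (by rw [hmeq]; exact hg_meas.mul hg_meas)
        (ae_of_all _ fun x => ?_)
      rw [Real.norm_eq_abs, abs_of_nonneg (sq_nonneg _), sq]
      exact mul_le_mul_of_nonneg_right (hg_le_C x) (hg_nonneg x)
    set n : ℕ → ℝ := fun k => if k = 0 then 4*L else 2*L with hn
    have hn_pos : ∀ k, 0 < n k := by
      intro k; rw [hn]; dsimp only; split <;> linarith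
    have hn_le : ∀ k, n k ≤ 4*L := by
      intro k; rw [hn]; dsimp only; split <;> linarith
    have horth_m : ∀ (m : ℤ) (k j : ℕ),
        ∫ x, e k x * e j x ∂(volume.restrict (J m)) = if k = j then n k else 0 := by
      intro m k j
      have hab : (4*L*(m:ℝ) - L) ≤ (4*L*(m:ℝ) + 3*L) := by linarith
      have hJm : volume.restrict (J m) = volume.restrict (Set.Ioc (4*L*(m:ℝ) - L) (4*L*(m:ℝ) + 3*L)) := by
        rw [hJdef]; exact restrict_Ico_eq_restrict_Ioc
      rw [hJm, ← intervalIntegral.integral_of_le hab]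
      have hb : 4*L*(m:ℝ) + 3*L = (4*L*(m:ℝ) - L) + 4*L := by ring
      rw [hb, orth hL k j (4*L*(m:ℝ) - L)]
    have hee_int : ∀ (m : ℤ) (k j : ℕ),
        Integrable (fun x => e k x * e j x) (volume.restrict (J m)) := by
      intro m k j
      refine Integrable.mono' (integrable_const 1)
        (((he_cont k).mul (he_cont j)).aestronglyMeasurable) (ae_of_all _ fun x => ?_)
      · rw [norm_mul, Real.norm_eq_abs, Real.norm_eq_abs]
        calc |e k x| * |e j x| ≤ 1 * 1 :=
          mul_le_mul (he_bd k x) (he_bd j x) (abs_nonneg _) zero_le_one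
          _ = 1 := mul_one 1
    haveI : ∀ m : ℤ, IsFiniteMeasure (volume.restrict (J m)) := by
      intro m
      exact ⟨by rw [Measure.restrict_apply_univ]; exact hJfin m⟩
    have hBessel : ∀ (m : ℤ) (F : Finset ℕ),
        ∑ k ∈ F, (ckm m k)^2 ≤ (4*L) * (C * Tm m) := by
      intro m F
      have h1 := bessel_finset (μ := volume.restrict (J m)) (g := g) (e := e) (n := n)
        (hg2_int.restrict) (fun k => (hge_int k).restrict) (hee_int m)
        (horth_m m) hn_pos F
      have h2 : (∫ x, g x ^ 2 ∂(volume.restrict (J m))) ≤ C * Tm m := by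
        have := setIntegral_mono_on (hg2_int.integrableOn)
          ((hg_int.const_mul C).integrableOn) (hJmeas m)
          (fun x _ => by rw [sq]; exact mul_le_mul_of_nonneg_right (hg_le_C x) (hg_nonneg x))
        calc (∫ x in J m, g x ^ 2) ≤ ∫ x in J m, C * g x := this
          _ = C * Tm m := by rw [hTm]; exact integral_const_mul _ _
      calc ∑ k ∈ F, (ckm m k)^2
          = ∑ k ∈ F, n k * ((ckm m k)^2 / n k) := by
            refine Finset.sum_congr rfl (fun k _ => ?_)
            rw [mul_div_cancel₀ _ (hn_pos k).ne']
        _ ≤ ∑ k ∈ F, (4*L) * ((ckm m k)^2 / n k) := by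
            refine Finset.sum_le_sum (fun k _ => ?_)
            exact mul_le_mul_of_nonneg_right (hn_le k)
              (div_nonneg (sq_nonneg _) (hn_pos k).le)
        _ = (4*L) * ∑ k ∈ F, ((ckm m k)^2 / n k) := by rw [Finset.mul_sum]
        _ ≤ (4*L) * ∫ x, g x ^ 2 ∂(volume.restrict (J m)) := by
            exact mul_le_mul_of_nonneg_left h1 (by positivity)
        _ ≤ (4*L) * (C * Tm m) := mul_le_mul_of_nonneg_left h2 (by positivity)
    have hsum_wc : ∀ k, Summable (fun m : ℤ => (1+(m:ℝ)^2) * (ckm m k)^2) := by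
      intro k
      have hR : Summable (fun m : ℤ => (1+(m:ℝ)^2) * ((4*L) * (C * Tm m))) :=
        (hsum_wTm.mul_left (4*L*C)).congr (fun m => by ring)
      refine Summable.of_nonneg_of_le (fun m => mul_nonneg (by positivity) (sq_nonneg _))
        (fun m => ?_) hR
      have hb := hBessel m {k}
      rw [Finset.sum_singleton] at hb
      exact mul_le_mul_of_nonneg_left hb (by positivity)
    have hCS : ∀ k, (∫ x, g x * e k x)^2 ≤ W * ∑' m : ℤ, (1+(m:ℝ)^2) * (ckm m k)^2 := by
      intro k
      rw [← (hHasSum k).tsum_eq]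
      exact tsum_sq_le_weighted (fun m => ckm m k) (fun m => 1+(m:ℝ)^2)
        (fun m => by positivity) (hHasSum k).summable (hsum_wc k) hWsum
    -- final finset bound
    have hFbound : ∀ F : Finset ℕ,
        ∑ k ∈ F, ((1/L) * |∫ x in (Set.Icc (-L) L)ᶜ, f x * Real.cos ((k:ℝ) * π * (x + L) / (2 * L))|^2)
          ≤ 8*C*W*M2/L^2 := by
      intro F
      have hterm : ∀ k : ℕ, |∫ x in (Set.Icc (-L) L)ᶜ, f x * Real.cos ((k:ℝ) * π * (x + L) / (2 * L))|^2
          = (∫ x, g x * e k x)^2 := by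
        intro k
        rw [sq_abs]
        congr 1
        exact hc_eq k
      have h1 : ∑ k ∈ F, ((1/L) * |∫ x in (Set.Icc (-L) L)ᶜ, f x * Real.cos ((k:ℝ) * π * (x + L) / (2 * L))|^2)
          = (1/L) * ∑ k ∈ F, (∫ x, g x * e k x)^2 := by
        rw [Finset.mul_sum]
        exact Finset.sum_congr rfl (fun k _ => by rw [hterm k])
      rw [h1]
      have h2 : ∑ k ∈ F, (∫ x, g x * e k x)^2 ≤ W * ∑' m : ℤ, (1+(m:ℝ)^2) * (∑ k ∈ F, (ckm m k)^2) := by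
        have h3 : ∑ k ∈ F, (∫ x, g x * e k x)^2
            ≤ ∑ k ∈ F, (W * ∑' m : ℤ, (1+(m:ℝ)^2) * (ckm m k)^2) :=
          Finset.sum_le_sum (fun k _ => hCS k)
        have h4 : ∑ k ∈ F, (W * ∑' m : ℤ, (1+(m:ℝ)^2) * (ckm m k)^2)
            = W * ∑' m : ℤ, ∑ k ∈ F, ((1+(m:ℝ)^2) * (ckm m k)^2) := by
          rw [← Finset.mul_sum]
          congr 1
          exact (Summable.tsum_finsetSum (fun k _ => hsum_wc k)).symm
        have h5 : (∑' m : ℤ, ∑ k ∈ F, ((1+(m:ℝ)^2) * (ckm m k)^2))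
            = ∑' m : ℤ, (1+(m:ℝ)^2) * (∑ k ∈ F, (ckm m k)^2) := by
          refine tsum_congr (fun m => ?_)
          rw [Finset.mul_sum]
        rw [h4, h5] at h3
        exact h3
      have h6 : ∑' m : ℤ, (1+(m:ℝ)^2) * (∑ k ∈ F, (ckm m k)^2)
          ≤ ∑' m : ℤ, (4*L*C) * ((1+(m:ℝ)^2) * Tm m) := by
        refine Summable.tsum_le_tsum (fun m => ?_) ?_ (hsum_wTm.mul_left (4*L*C))
        · calc (1+(m:ℝ)^2) * (∑ k ∈ F, (ckm m k)^2)
              ≤ (1+(m:ℝ)^2) * ((4*L) * (C * Tm m)) :=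
                mul_le_mul_of_nonneg_left (hBessel m F) (by positivity)
            _ = (4*L*C) * ((1+(m:ℝ)^2) * Tm m) := by ring
        · have hsummand : Summable (fun m : ℤ => ∑ k ∈ F, ((1+(m:ℝ)^2) * (ckm m k)^2)) :=
            summable_sum (fun k _ => hsum_wc k)
          exact hsummand.congr (fun m => by rw [Finset.mul_sum])
      have h7 : ∑' m : ℤ, (4*L*C) * ((1+(m:ℝ)^2) * Tm m) ≤ (4*L*C) * (2*M2/L^2) := by
        rw [tsum_mul_left]
        exact mul_le_mul_of_nonneg_left htsum_wTm (by positivity)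
      have h8 : ∑ k ∈ F, (∫ x, g x * e k x)^2 ≤ W * ((4*L*C) * (2*M2/L^2)) := by
        refine h2.trans ?_
        refine mul_le_mul_of_nonneg_left (h6.trans h7) hW0
      calc (1/L) * ∑ k ∈ F, (∫ x, g x * e k x)^2
          ≤ (1/L) * (W * ((4*L*C) * (2*M2/L^2))) := by
            refine mul_le_mul_of_nonneg_left h8 (by positivity)
        _ = 8*C*W*M2/L^2 := by field_simp; ring
    have hnonnegK : (0:ℝ) ≤ 8*C*W*M2/L^2 := by positivity
    calc cosB f L
        = ∑' k : ℕ, ((1/L) * |∫ x in (Set.Icc (-L) L)ᶜ, f x * Real.cos ((k:ℝ) * π * (x + L) / (2 * L))|^2) := rfl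
      _ ≤ 8*C*W*M2/L^2 := tsum_le_of_sum_le' hnonnegK hFbound
  -- conclude
  unfold COSAdmissible
  have hb : Tendsto (fun L : ℝ => (8*C*W*M2) / L^2) atTop (nhds 0) := by
    have h1 : Tendsto (fun L : ℝ => L^2) atTop atTop := tendsto_pow_atTop two_ne_zero
    have h2 : Tendsto (fun L : ℝ => (L^2)⁻¹) atTop (nhds 0) := h1.inv_tendsto_atTop
    have h3 := h2.const_mul (8*C*W*M2)
    rw [mul_zero] at h3
    exact h3.congr (fun L => by rw [div_eq_mul_inv])
  refine squeeze_zero' ?_ ?_ hb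
  · filter_upwards [eventually_gt_atTop (0:ℝ)] with L hL
    refine tsum_nonneg (fun k => ?_)
    positivity
  · filter_upwards [eventually_gt_atTop (0:ℝ)] with L hL
    exact key L hL
end

section
/- For parameters c > 0 and μ ∈ ℝ, the Cauchy density f(x) = c/(π(c² + (x−μ)²)) is COS-admissible. -/
open MeasureTheory Real Filter

open Set Topology

lemma cauchy_hasDerivAt (c ν : ℝ) (hc : 0 < c) (x : ℝ) :
    HasDerivAt (fun x : ℝ => c / (π * (c ^ 2 + (x - ν) ^ 2)))
      (-(2 * c * (x - ν)) / (π * (c ^ 2 + (x - ν) ^ 2) ^ 2)) x := by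
  have hu : 0 < c ^ 2 + (x - ν) ^ 2 := add_pos_of_pos_of_nonneg (pow_pos hc 2) (sq_nonneg _)
  have hden : HasDerivAt (fun x : ℝ => π * (c ^ 2 + (x - ν) ^ 2)) (π * (2 * (x - ν))) x := by
    have h1 : HasDerivAt (fun x : ℝ => c ^ 2 + (x - ν) ^ 2) (2 * (x - ν)) x := by
      simpa using ((((hasDerivAt_id x).sub_const ν).pow 2).const_add (c ^ 2))
    exact h1.const_mul π
  have h2 := (hasDerivAt_const x c).div hden (by positivity)
  refine h2.congr_deriv ?_
  field_simp
  ring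

lemma cauchy_tendsto_zero (c ν : ℝ) :
    Tendsto (fun x : ℝ => c / (π * (c ^ 2 + (x - ν) ^ 2))) atTop (𝓝 0) := by
  apply Tendsto.div_atTop tendsto_const_nhds
  apply Tendsto.const_mul_atTop pi_pos
  apply tendsto_atTop_add_const_left
  have h1 : Tendsto (fun x : ℝ => x - ν) atTop atTop := tendsto_atTop_add_const_right _ (-ν) tendsto_id
  exact (tendsto_pow_atTop (two_ne_zero)).comp h1

lemma q_spec (c ν L : ℝ) (hc : 0 < c) (hν : ν < L) :
    IntegrableOn (fun x => c / (π * (x - ν) ^ 2)) (Ioi L) ∧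
      ∫ x in Ioi L, c / (π * (x - ν) ^ 2) = c / (π * (L - ν)) := by
  have hder : ∀ x ∈ Ici L, HasDerivAt (fun x : ℝ => -c / (π * (x - ν))) (c / (π * (x - ν) ^ 2)) x := by
    intro x hx
    have hx' : 0 < x - ν := by simp only [mem_Ici] at hx; linarith
    have hden : HasDerivAt (fun x : ℝ => π * (x - ν)) (π * 1) x :=
      ((hasDerivAt_id x).sub_const ν).const_mul π
    have h2 := (hasDerivAt_const x (-c)).div hden (by positivity)
    refine h2.congr_deriv ?_
    field_simp
    ring
  have hpos : ∀ x ∈ Ioi L, 0 ≤ c / (π * (x - ν) ^ 2) := fun x hx => by positivity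
  have htend : Tendsto (fun x : ℝ => -c / (π * (x - ν))) atTop (𝓝 0) := by
    apply Tendsto.div_atTop tendsto_const_nhds
    apply Tendsto.const_mul_atTop pi_pos
    exact tendsto_atTop_add_const_right _ (-ν) tendsto_id |>.congr (fun x => by simp; ring)
  refine ⟨integrableOn_Ioi_deriv_of_nonneg' hder hpos htend, ?_⟩
  rw [integral_Ioi_of_hasDerivAt_of_nonneg' hder hpos htend]
  ring

lemma r_spec (c ν L : ℝ) (hc : 0 < c) (hν : ν < L) :
    IntegrableOn (fun x => 2 * c / (π * (x - ν) ^ 3)) (Ioi L) ∧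
      ∫ x in Ioi L, 2 * c / (π * (x - ν) ^ 3) = c / (π * (L - ν) ^ 2) := by
  have hder : ∀ x ∈ Ici L, HasDerivAt (fun x : ℝ => -c / (π * (x - ν) ^ 2))
      (2 * c / (π * (x - ν) ^ 3)) x := by
    intro x hx
    have hx' : 0 < x - ν := by simp only [mem_Ici] at hx; linarith
    have hden : HasDerivAt (fun x : ℝ => π * (x - ν) ^ 2) (π * (2 * (x - ν))) x := by
      simpa using (((hasDerivAt_id x).sub_const ν).pow 2).const_mul π
    have h2 := (hasDerivAt_const x (-c)).div hden (by positivity)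
    refine h2.congr_deriv ?_
    field_simp
    ring
  have hpos : ∀ x ∈ Ioi L, 0 ≤ 2 * c / (π * (x - ν) ^ 3) := by
    intro x hx
    have hx' : 0 < x - ν := by simp only [mem_Ioi] at hx; linarith
    positivity
  have htend : Tendsto (fun x : ℝ => -c / (π * (x - ν) ^ 2)) atTop (𝓝 0) := by
    apply Tendsto.div_atTop tendsto_const_nhds
    apply Tendsto.const_mul_atTop pi_pos
    have h1 : Tendsto (fun x : ℝ => x - ν) atTop atTop := tendsto_atTop_add_const_right _ (-ν) tendsto_id
    exact (tendsto_pow_atTop (two_ne_zero)).comp h1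
  refine ⟨integrableOn_Ioi_deriv_of_nonneg' hder hpos htend, ?_⟩
  rw [integral_Ioi_of_hasDerivAt_of_nonneg' hder hpos htend]
  ring

lemma tail_bound_zero (c ν L : ℝ) (hc : 0 < c) (hν : ν < L) (φ : ℝ → ℝ)
    (hφ : ∀ x, |φ x| ≤ 1) :
    |∫ x in Ioi L, c / (π * (c ^ 2 + (x - ν) ^ 2)) * φ x| ≤ c / (π * (L - ν)) := by
  have hq := q_spec c ν L hc hν
  calc |∫ x in Ioi L, c / (π * (c ^ 2 + (x - ν) ^ 2)) * φ x|
      = ‖∫ x in Ioi L, c / (π * (c ^ 2 + (x - ν) ^ 2)) * φ x‖ := (Real.norm_eq_abs _).symm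
    _ ≤ ∫ x in Ioi L, ‖c / (π * (c ^ 2 + (x - ν) ^ 2)) * φ x‖ := norm_integral_le_integral_norm _
    _ ≤ ∫ x in Ioi L, c / (π * (x - ν) ^ 2) := by
        apply integral_mono_of_nonneg (Eventually.of_forall fun x => norm_nonneg _) hq.1
        rw [EventuallyLE, ae_restrict_iff' measurableSet_Ioi]
        apply Eventually.of_forall
        intro x hx
        have hx' : 0 < x - ν := by simp only [mem_Ioi] at hx; linarith
        have hu : 0 < c ^ 2 + (x - ν) ^ 2 := add_pos_of_pos_of_nonneg (pow_pos hc 2) (sq_nonneg _)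
        have h1 : ‖c / (π * (c ^ 2 + (x - ν) ^ 2)) * φ x‖ ≤ c / (π * (c ^ 2 + (x - ν) ^ 2)) := by
          rw [norm_mul, Real.norm_eq_abs, Real.norm_eq_abs,
            abs_of_pos (by positivity : (0:ℝ) < c / (π * (c ^ 2 + (x - ν) ^ 2)))]
          nlinarith [hφ x, abs_nonneg (φ x), (by positivity : (0:ℝ) < c / (π * (c ^ 2 + (x - ν) ^ 2)))]
        refine h1.trans ?_
        apply div_le_div_of_nonneg_left hc.le (by positivity)
        nlinarith [sq_nonneg c, pi_pos]
    _ = c / (π * (L - ν)) := hq.2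

lemma tail_bound_pos (c ν L ω θ : ℝ) (hc : 0 < c) (hν : ν < L) (hω : 0 < ω)
    (hsin : Real.sin (ω * L + θ) = 0) :
    |∫ x in Ioi L, c / (π * (c ^ 2 + (x - ν) ^ 2)) * Real.cos (ω * x + θ)| ≤
      c / (ω * π * (L - ν) ^ 2) := by
  set f : ℝ → ℝ := fun x => c / (π * (c ^ 2 + (x - ν) ^ 2)) with hfdef
  set f' : ℝ → ℝ := fun x => -(2 * c * (x - ν)) / (π * (c ^ 2 + (x - ν) ^ 2) ^ 2) with hf'def
  have hu : ∀ x : ℝ, 0 < c ^ 2 + (x - ν) ^ 2 :=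
    fun x => add_pos_of_pos_of_nonneg (pow_pos hc 2) (sq_nonneg _)
  have hq := q_spec c ν L hc hν
  have hr := r_spec c ν L hc hν
  have hucont : Continuous fun x : ℝ => c ^ 2 + (x - ν) ^ 2 :=
    continuous_const.add ((continuous_id.sub continuous_const).pow 2)
  have hscont : Continuous fun x : ℝ => Real.sin (ω * x + θ) :=
    Real.continuous_sin.comp ((continuous_const.mul continuous_id).add continuous_const)
  have hccont : Continuous fun x : ℝ => Real.cos (ω * x + θ) :=
    Real.continuous_cos.comp ((continuous_const.mul continuous_id).add continuous_const)
  have hfcont : Continuous f :=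
    continuous_const.div (continuous_const.mul hucont) (fun x => (mul_pos pi_pos (hu x)).ne')
  have hf'cont : Continuous f' :=
    ((continuous_const.mul (continuous_id.sub continuous_const)).neg).div
      (continuous_const.mul (hucont.pow 2)) (fun x => (mul_pos pi_pos (pow_pos (hu x) 2)).ne')
  -- derivative of F
  have hderF : ∀ x ∈ Ici L, HasDerivAt (fun x => f x * Real.sin (ω * x + θ) / ω)
      (f' x * Real.sin (ω * x + θ) / ω + f x * Real.cos (ω * x + θ)) x := by
    intro x _
    have h1 : HasDerivAt (fun x : ℝ => Real.sin (ω * x + θ)) (Real.cos (ω * x + θ) * ω) x := by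
      have h0 : HasDerivAt (fun x : ℝ => ω * x + θ) ω x := by
        simpa using ((hasDerivAt_id x).const_mul ω).add_const θ
      exact h0.sin
    have h2 := ((cauchy_hasDerivAt c ν hc x).mul h1).div_const ω
    have heq : (-(2 * c * (x - ν)) / (π * (c ^ 2 + (x - ν) ^ 2) ^ 2) * Real.sin (ω * x + θ) +
        c / (π * (c ^ 2 + (x - ν) ^ 2)) * (Real.cos (ω * x + θ) * ω)) / ω
        = f' x * Real.sin (ω * x + θ) / ω + f x * Real.cos (ω * x + θ) := by
      rw [add_div]
      congr 1
      rw [mul_div_assoc, mul_div_cancel_right₀ _ hω.ne']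
    rw [heq] at h2
    exact h2
  -- pointwise bound for f' term
  have hbd : ∀ x ∈ Ioi L, ‖f' x * Real.sin (ω * x + θ) / ω‖ ≤ 2 * c / (π * (x - ν) ^ 3) / ω := by
    intro x hx
    have hx' : 0 < x - ν := by simp only [mem_Ioi] at hx; linarith
    have hux := hu x
    have habs : |f' x| ≤ 2 * c / (π * (x - ν) ^ 3) := by
      rw [hf'def]
      rw [abs_div, abs_of_pos (by positivity : (0:ℝ) < π * (c ^ 2 + (x - ν) ^ 2) ^ 2),
        abs_neg, abs_of_pos (by positivity : (0:ℝ) < 2 * c * (x - ν))]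
      rw [div_le_div_iff₀ (by positivity) (by positivity)]
      have h4 : (x - ν) ^ 4 ≤ (c ^ 2 + (x - ν) ^ 2) ^ 2 := by
        nlinarith [sq_nonneg c, sq_nonneg (c * (x - ν)), sq_nonneg (x - ν)]
      calc 2 * c * (x - ν) * (π * (x - ν) ^ 3) = 2 * c * π * (x - ν) ^ 4 := by ring
        _ ≤ 2 * c * π * (c ^ 2 + (x - ν) ^ 2) ^ 2 :=
            mul_le_mul_of_nonneg_left h4 (by positivity)
        _ = 2 * c * (π * (c ^ 2 + (x - ν) ^ 2) ^ 2) := by ring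
    have hmul : |f' x| * |Real.sin (ω * x + θ)| ≤ (2 * c / (π * (x - ν) ^ 3)) * 1 :=
      mul_le_mul habs (abs_sin_le_one _) (abs_nonneg _) (by positivity)
    calc ‖f' x * Real.sin (ω * x + θ) / ω‖ = |f' x| * |Real.sin (ω * x + θ)| / ω := by
          rw [Real.norm_eq_abs, abs_div, abs_mul, abs_of_pos hω]
      _ ≤ (2 * c / (π * (x - ν) ^ 3)) * 1 / ω := by gcongr
      _ = 2 * c / (π * (x - ν) ^ 3) / ω := by ring
  -- integrabilities
  have hint1 : IntegrableOn (fun x => f' x * Real.sin (ω * x + θ) / ω) (Ioi L) := by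
    apply Integrable.mono' (hr.1.div_const ω)
    · exact ((hf'cont.mul hscont).div_const ω).aestronglyMeasurable.restrict
    · rw [ae_restrict_iff' measurableSet_Ioi]
      exact Eventually.of_forall hbd
  have hint2 : IntegrableOn (fun x => f x * Real.cos (ω * x + θ)) (Ioi L) := by
    apply Integrable.mono' hq.1
    · exact (hfcont.mul hccont).aestronglyMeasurable.restrict
    · rw [ae_restrict_iff' measurableSet_Ioi]
      apply Eventually.of_forall
      intro x hx
      have hx' : 0 < x - ν := by simp only [mem_Ioi] at hx; linarith
      have hux := hu x
      have hfb : |f x| ≤ c / (π * (x - ν) ^ 2) := by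
        rw [show f x = c / (π * (c ^ 2 + (x - ν) ^ 2)) from rfl,
          abs_of_pos (by positivity : (0:ℝ) < c / (π * (c ^ 2 + (x - ν) ^ 2)))]
        apply div_le_div_of_nonneg_left hc.le (by positivity)
        nlinarith [sq_nonneg c, pi_pos]
      calc ‖f x * Real.cos (ω * x + θ)‖ = |f x| * |Real.cos (ω * x + θ)| := by
            rw [Real.norm_eq_abs, abs_mul]
        _ ≤ (c / (π * (x - ν) ^ 2)) * 1 :=
            mul_le_mul hfb (abs_cos_le_one _) (abs_nonneg _) (by positivity)
        _ = c / (π * (x - ν) ^ 2) := by ring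
  -- limit of F at infinity
  have htendF : Tendsto (fun x => f x * Real.sin (ω * x + θ) / ω) atTop (𝓝 0) := by
    apply squeeze_zero_norm (a := fun x => f x / ω)
    · intro x
      have hfx : (0:ℝ) < f x :=
        show (0:ℝ) < c / (π * (c ^ 2 + (x - ν) ^ 2)) by positivity
      have h1 : f x * |Real.sin (ω * x + θ)| ≤ f x := by
        nlinarith [abs_sin_le_one (ω * x + θ), abs_nonneg (Real.sin (ω * x + θ))]
      rw [Real.norm_eq_abs, abs_div, abs_mul, abs_of_pos hω, abs_of_pos hfx]
      gcongr
    · simpa using (cauchy_tendsto_zero c ν).div_const ω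
  -- integration by parts identity
  have key := integral_Ioi_of_hasDerivAt_of_tendsto' hderF (hint1.add hint2) htendF
  rw [integral_add hint1 hint2] at key
  have hFL : f L * Real.sin (ω * L + θ) / ω = 0 := by rw [hsin]; ring
  have h2 : ∫ x in Ioi L, f x * Real.cos (ω * x + θ)
      = -∫ x in Ioi L, f' x * Real.sin (ω * x + θ) / ω := by
    rw [hFL] at key; linarith [key]
  rw [show |∫ x in Ioi L, f x * Real.cos (ω * x + θ)|
      = ‖∫ x in Ioi L, f x * Real.cos (ω * x + θ)‖ from (Real.norm_eq_abs _).symm, h2, norm_neg]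
  calc ‖∫ x in Ioi L, f' x * Real.sin (ω * x + θ) / ω‖
      ≤ ∫ x in Ioi L, ‖f' x * Real.sin (ω * x + θ) / ω‖ := norm_integral_le_integral_norm _
    _ ≤ ∫ x in Ioi L, 2 * c / (π * (x - ν) ^ 3) / ω := by
        apply integral_mono_of_nonneg (Eventually.of_forall fun x => norm_nonneg _)
          (hr.1.div_const ω)
        rw [EventuallyLE, ae_restrict_iff' measurableSet_Ioi]
        exact Eventually.of_forall hbd
    _ = (∫ x in Ioi L, 2 * c / (π * (x - ν) ^ 3)) / ω := integral_div ω _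
    _ = c / (π * (L - ν) ^ 2) / ω := by rw [hr.2]
    _ = c / (ω * π * (L - ν) ^ 2) := by rw [div_div, mul_comm, ← mul_assoc]

lemma integral_Iio_reflect (L : ℝ) (g : ℝ → ℝ) :
    ∫ x in Iio (-L), g x = ∫ x in Ioi L, g (-x) := by
  rw [← integral_Iic_eq_integral_Iio, ← integral_comp_neg_Ioi]

lemma cauchy_integrable (c μ : ℝ) (hc : 0 < c) :
    Integrable (fun x : ℝ => c / (π * (c ^ 2 + (x - μ) ^ 2))) := by
  have h0 : Integrable (fun x : ℝ => (1 + x ^ 2)⁻¹) := integrable_inv_one_add_sq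
  have h1 : Integrable (fun x : ℝ => (1 + (x / c) ^ 2)⁻¹) := h0.comp_div hc.ne'
  have h2 : Integrable (fun x : ℝ => (1 + ((x - μ) / c) ^ 2)⁻¹) := h1.comp_sub_right μ
  have h3 := h2.const_mul (1 / (π * c))
  apply h3.congr
  apply Eventually.of_forall
  intro x
  have hu : 0 < c ^ 2 + (x - μ) ^ 2 := add_pos_of_pos_of_nonneg (pow_pos hc 2) (sq_nonneg _)
  have h4 : (0:ℝ) < 1 + ((x - μ) / c) ^ 2 := by positivity
  field_simp

lemma cauchy_mul_cos_integrable (c μ : ℝ) (hc : 0 < c) (φ : ℝ → ℝ) (hφm : Continuous φ)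
    (hφ : ∀ x, |φ x| ≤ 1) :
    Integrable (fun x : ℝ => c / (π * (c ^ 2 + (x - μ) ^ 2)) * φ x) := by
  have := (cauchy_integrable c μ hc).bdd_mul hφm.aestronglyMeasurable
    (Eventually.of_forall fun x => by rw [Real.norm_eq_abs]; exact hφ x)
  apply this.congr
  exact Eventually.of_forall fun x => by ring

lemma tail_total (c μ L : ℝ) (hc : 0 < c) (hL : 2 * |μ| + 2 ≤ L) (k : ℕ) :
    |∫ x in (Icc (-L) L)ᶜ, c / (π * (c ^ 2 + (x - μ) ^ 2)) *
        Real.cos (k * π * (x + L) / (2 * L))| ≤ 32 * c / ((k + 1) * L) := by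
  have hμ : (0:ℝ) ≤ |μ| := abs_nonneg μ
  have hμ1 : μ ≤ |μ| := le_abs_self μ
  have hμ2 : -μ ≤ |μ| := neg_le_abs μ
  have hLpos : (0:ℝ) < L := by linarith
  have hμL : |μ| < L := by linarith
  have hμL1 : μ < L := by linarith
  have hμL2 : -μ < L := by linarith
  have hcos1 : ∀ x : ℝ, |Real.cos ((k : ℝ) * π * (x + L) / (2 * L))| ≤ 1 :=
    fun x => abs_cos_le_one _
  have hccont : Continuous fun x : ℝ => Real.cos ((k : ℝ) * π * (x + L) / (2 * L)) := by
    apply Real.continuous_cos.comp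
    exact (continuous_const.mul (continuous_id.add continuous_const)).div_const _
  have hIcc : (Icc (-L) L)ᶜ = Iio (-L) ∪ Ioi L := by
    ext x
    simp only [mem_compl_iff, mem_Icc, not_and_or, not_le, mem_union, mem_Iio, mem_Ioi]
  have hint := cauchy_mul_cos_integrable c μ hc _ hccont hcos1
  rw [hIcc, setIntegral_union ((Iio_disjoint_Ici (by linarith : -L ≤ L)).mono_right Ioi_subset_Ici_self) measurableSet_Ioi
    hint.integrableOn hint.integrableOn]
  refine (abs_add_le _ _).trans ?_
  -- rewrite the Iio integral by reflection
  rw [integral_Iio_reflect]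
  simp_rw [show ∀ x : ℝ, (-x - μ) ^ 2 = (x - -μ) ^ 2 from fun x => by ring]
  rcases Nat.eq_zero_or_pos k with hk0 | hk0
  · -- k = 0 : crude bound suffices
    subst hk0
    have hb1 := tail_bound_zero c (-μ) L hc hμL2
      (fun x => Real.cos ((0:ℕ) * π * (-x + L) / (2 * L))) (fun x => abs_cos_le_one _)
    have hb2 := tail_bound_zero c μ L hc hμL1
      (fun x => Real.cos ((0:ℕ) * π * (x + L) / (2 * L))) (fun x => abs_cos_le_one _)
    have h3 : (3:ℝ) ≤ π := pi_gt_three.le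
    have e1 : c / (π * (L - -μ)) ≤ 2 * c / L := by
      have hp : (3:ℝ) * (L / 2) ≤ π * (L - -μ) :=
        mul_le_mul h3 (by linarith) (by linarith) (by linarith [pi_pos])
      rw [div_le_div_iff₀ (by nlinarith) hLpos]
      nlinarith [mul_le_mul_of_nonneg_left hp hc.le, mul_pos hc hLpos]
    have e2 : c / (π * (L - μ)) ≤ 2 * c / L := by
      have hp : (3:ℝ) * (L / 2) ≤ π * (L - μ) :=
        mul_le_mul h3 (by linarith) (by linarith) (by linarith [pi_pos])
      rw [div_le_div_iff₀ (by nlinarith) hLpos]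
      nlinarith [mul_le_mul_of_nonneg_left hp hc.le, mul_pos hc hLpos]
    have e3 : (2:ℝ) * c / L + 2 * c / L ≤ 32 * c / (((0:ℕ) + 1) * L) := by
      norm_num
      rw [← add_div]
      have h24 : (2:ℝ) * c + 2 * c ≤ 32 * c := by linarith
      gcongr
    calc |∫ x in Ioi L, c / (π * (c ^ 2 + (x - -μ) ^ 2)) *
            Real.cos ((0:ℕ) * π * (-x + L) / (2 * L))|
          + |∫ x in Ioi L, c / (π * (c ^ 2 + (x - μ) ^ 2)) *
            Real.cos ((0:ℕ) * π * (x + L) / (2 * L))|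
        ≤ c / (π * (L - -μ)) + c / (π * (L - μ)) := add_le_add hb1 hb2
      _ ≤ 2 * c / L + 2 * c / L := add_le_add e1 e2
      _ ≤ 32 * c / (((0:ℕ) + 1) * L) := e3
  · -- k ≥ 1 : integration by parts bound
    have hk1 : (1:ℝ) ≤ (k:ℝ) := by exact_mod_cast hk0
    have hkpos : (0:ℝ) < (k:ℝ) := by linarith
    have hω : (0:ℝ) < (k:ℝ) * π / (2 * L) := by
      apply div_pos (mul_pos hkpos pi_pos) (by linarith)
    -- rewrite the cosine arguments into the ω x + θ form
    have harg1 : ∀ x : ℝ, (k:ℝ) * π * (x + L) / (2 * L)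
        = ((k:ℝ) * π / (2 * L)) * x + (k:ℝ) * π / 2 := by
      intro x; field_simp
    have harg2 : ∀ x : ℝ, (k:ℝ) * π * (-x + L) / (2 * L)
        = -(((k:ℝ) * π / (2 * L)) * x + -((k:ℝ) * π / 2)) := by
      intro x; field_simp; ring
    simp_rw [harg2, Real.cos_neg, harg1]
    have hsin1 : Real.sin (((k:ℝ) * π / (2 * L)) * L + (k:ℝ) * π / 2) = 0 := by
      rw [show ((k:ℝ) * π / (2 * L)) * L + (k:ℝ) * π / 2 = (k:ℝ) * π by field_simp; ring]
      exact Real.sin_nat_mul_pi k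
    have hsin2 : Real.sin (((k:ℝ) * π / (2 * L)) * L + -((k:ℝ) * π / 2)) = 0 := by
      rw [show ((k:ℝ) * π / (2 * L)) * L + -((k:ℝ) * π / 2) = 0 by field_simp; ring]
      exact Real.sin_zero
    have hb1 := tail_bound_pos c (-μ) L ((k:ℝ) * π / (2 * L)) (-((k:ℝ) * π / 2)) hc hμL2 hω hsin2
    have hb2 := tail_bound_pos c μ L ((k:ℝ) * π / (2 * L)) ((k:ℝ) * π / 2) hc hμL1 hω hsin1
    -- numeric estimate of the bounds
    have h3 : (3:ℝ) ≤ π := pi_gt_three.le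
    have hden : ∀ t : ℝ, L / 2 ≤ t → (k:ℝ) * L ≤ ((k:ℝ) * π / (2 * L)) * π * t ^ 2 := by
      intro t ht
      rw [div_mul_eq_mul_div, div_mul_eq_mul_div, le_div_iff₀ (by linarith : (0:ℝ) < 2 * L)]
      have ht2 : (L / 2) ^ 2 ≤ t ^ 2 := pow_le_pow_left₀ (by linarith) ht 2
      have h9 : (9:ℝ) ≤ π * π := by
        calc (9:ℝ) = 3 * 3 := by norm_num
          _ ≤ π * π := mul_le_mul h3 h3 (by norm_num) (by linarith)
      have h5 : 2 * L ^ 2 ≤ π * π * t ^ 2 := by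
        calc 2 * L ^ 2 ≤ 9 * (L / 2) ^ 2 := by nlinarith [sq_nonneg L]
          _ ≤ (π * π) * t ^ 2 := mul_le_mul h9 ht2 (sq_nonneg _) (by linarith)
      calc (k:ℝ) * L * (2 * L) = (k:ℝ) * (2 * L ^ 2) := by ring
        _ ≤ (k:ℝ) * (π * π * t ^ 2) := mul_le_mul_of_nonneg_left h5 (by linarith)
        _ = (k:ℝ) * π * π * t ^ 2 := by ring
    have e1 : c / (((k:ℝ) * π / (2 * L)) * π * (L - -μ) ^ 2) ≤ c / ((k:ℝ) * L) := by
      apply div_le_div_of_nonneg_left hc.le (mul_pos hkpos hLpos)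
      exact hden _ (by linarith)
    have e2 : c / (((k:ℝ) * π / (2 * L)) * π * (L - μ) ^ 2) ≤ c / ((k:ℝ) * L) := by
      apply div_le_div_of_nonneg_left hc.le (mul_pos hkpos hLpos)
      exact hden _ (by linarith)
    have e3 : c / ((k:ℝ) * L) + c / ((k:ℝ) * L) ≤ 32 * c / (((k:ℝ) + 1) * L) := by
      rw [← add_div, div_le_div_iff₀ (mul_pos hkpos hLpos)
        (mul_pos (by linarith : (0:ℝ) < (k:ℝ) + 1) hLpos)]
      nlinarith [mul_le_mul_of_nonneg_left hk1 (mul_pos hc hLpos).le,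
        mul_pos hc hLpos, mul_pos (mul_pos hc hLpos) hkpos]
    exact le_trans (add_le_add hb1 hb2) (le_trans (add_le_add e1 e2) e3)
lemma summable_shift : Summable (fun k : ℕ => 1 / ((k : ℝ) + 1) ^ 2) := by
  have h0 : Summable (fun n : ℕ => (1 : ℝ) / (n : ℝ) ^ 2) := hasSum_zeta_two.summable
  have h1 := (summable_nat_add_iff 1).2 h0
  simpa using h1

lemma tsum_shift_le : ∑' k : ℕ, 1 / ((k : ℝ) + 1) ^ 2 ≤ 3 := by
  have h0 := hasSum_zeta_two.tsum_eq
  rw [Summable.tsum_eq_zero_add hasSum_zeta_two.summable] at h0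
  have h1 : ∑' k : ℕ, 1 / ((k : ℝ) + 1) ^ 2 = π ^ 2 / 6 := by
    simpa using h0
  rw [h1]
  nlinarith [pi_le_four, pi_pos]

theorem stmt_4 (c μ : ℝ) (hc : 0 < c) :
    COSAdmissible (fun x => c / (π * (c ^ 2 + (x - μ) ^ 2))) := by
  unfold COSAdmissible
  apply squeeze_zero' (g := fun L => 3072 * c ^ 2 / L)
  · filter_upwards [eventually_ge_atTop (2 * |μ| + 2)] with L hL
    have hLpos : 0 < L := by have := abs_nonneg μ; linarith
    apply tsum_nonneg
    intro k
    have : (0:ℝ) ≤ 1 / L := by positivity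
    positivity
  · filter_upwards [eventually_ge_atTop (2 * |μ| + 2)] with L hL
    have hμ : (0:ℝ) ≤ |μ| := abs_nonneg μ
    have hLpos : 0 < L := by linarith
    have hL2 : (2:ℝ) ≤ L := by linarith
    have hterm : ∀ k : ℕ, (1 / L) *
        |∫ x in (Icc (-L) L)ᶜ, c / (π * (c ^ 2 + (x - μ) ^ 2)) *
          Real.cos (k * π * (x + L) / (2 * L))| ^ 2
        ≤ 1024 * c ^ 2 / L ^ 3 * (1 / ((k : ℝ) + 1) ^ 2) := by
      intro k
      have hb := tail_total c μ L hc hL k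
      have hk1 : (0:ℝ) < (k : ℝ) + 1 := by positivity
      have habs : |∫ x in (Icc (-L) L)ᶜ, c / (π * (c ^ 2 + (x - μ) ^ 2)) *
          Real.cos (k * π * (x + L) / (2 * L))| ^ 2 ≤ (32 * c / (((k:ℝ) + 1) * L)) ^ 2 :=
        pow_le_pow_left₀ (abs_nonneg _) hb 2
      calc (1 / L) * |∫ x in (Icc (-L) L)ᶜ, c / (π * (c ^ 2 + (x - μ) ^ 2)) *
            Real.cos (k * π * (x + L) / (2 * L))| ^ 2
          ≤ (1 / L) * (32 * c / (((k:ℝ) + 1) * L)) ^ 2 :=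
            mul_le_mul_of_nonneg_left habs (by positivity)
        _ = 1024 * c ^ 2 / L ^ 3 * (1 / ((k : ℝ) + 1) ^ 2) := by
            field_simp
            ring
    have hSb : Summable (fun k : ℕ => 1024 * c ^ 2 / L ^ 3 * (1 / ((k : ℝ) + 1) ^ 2)) :=
      summable_shift.mul_left _
    have hSt : Summable (fun k : ℕ => (1 / L) *
        |∫ x in (Icc (-L) L)ᶜ, c / (π * (c ^ 2 + (x - μ) ^ 2)) *
          Real.cos (k * π * (x + L) / (2 * L))| ^ 2) := by
      apply Summable.of_nonneg_of_le _ hterm hSb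
      intro k
      have : (0:ℝ) ≤ 1 / L := by positivity
      positivity
    calc cosB (fun x => c / (π * (c ^ 2 + (x - μ) ^ 2))) L
        = ∑' k : ℕ, (1 / L) *
          |∫ x in (Icc (-L) L)ᶜ, c / (π * (c ^ 2 + (x - μ) ^ 2)) *
            Real.cos (k * π * (x + L) / (2 * L))| ^ 2 := rfl
      _ ≤ ∑' k : ℕ, 1024 * c ^ 2 / L ^ 3 * (1 / ((k : ℝ) + 1) ^ 2) :=
          Summable.tsum_le_tsum hterm hSt hSb
      _ = 1024 * c ^ 2 / L ^ 3 * ∑' k : ℕ, 1 / ((k : ℝ) + 1) ^ 2 := tsum_mul_left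
      _ ≤ 1024 * c ^ 2 / L ^ 3 * 3 := by
          apply mul_le_mul_of_nonneg_left tsum_shift_le (by positivity)
      _ ≤ 3072 * c ^ 2 / L := by
          have hsq : (4:ℝ) ≤ L ^ 2 := by nlinarith
          have hcube : L ≤ L ^ 3 := by nlinarith [mul_le_mul_of_nonneg_left hsq hLpos.le]
          calc 1024 * c ^ 2 / L ^ 3 * 3 = 3072 * c ^ 2 / L ^ 3 := by ring
            _ ≤ 3072 * c ^ 2 / L := by gcongr
  · exact tendsto_const_nhds.div_atTop tendsto_id
end

section
/- Let α > 0 and β > 0, and let f be the Pareto density f(x) = α β^α x^{−(α+1)} for x ≥ β and f(x) = 0 for x < β. Then for every L ≥ β, B(L) ≤ β^{2α}/L^{2α+1} + (4α²β^{2α}/(π² L^{2α+1}))·Σ_{k=1}^∞ 1/k², and consequently f is COS-admissible. -/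
open MeasureTheory Real Filter

/-- The Pareto density with scale `β > 0` and shape `α > 0`. -/
noncomputable def paretoDensity (α β : ℝ) (x : ℝ) : ℝ :=
  if β ≤ x then α * β ^ α * x ^ (-(α + 1)) else 0

-- restrict the integral to Ioi L and replace the density by its formula
lemma pareto_intg_eq (α β L : ℝ) (hβ : 0 < β) (hL : β ≤ L) (k : ℕ) :
    ∫ x in (Set.Icc (-L) L)ᶜ, paretoDensity α β x * Real.cos (k * π * (x + L) / (2 * L)) =
    ∫ x in Set.Ioi L, (α * β ^ α * x ^ (-(α + 1))) * Real.cos (k * π * (x + L) / (2 * L)) := by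
  have hL0 : 0 < L := hβ.trans_le hL
  rw [MeasureTheory.setIntegral_eq_of_subset_of_ae_diff_eq_zero
      (measurableSet_Icc.compl.nullMeasurableSet)
      (fun x hx => by
        simp only [Set.mem_compl_iff, Set.mem_Icc, not_and_or, not_le]
        right; exact hx)
      (ae_of_all _ fun x hx => by
        obtain ⟨hx1, hx2⟩ := hx
        simp only [Set.mem_compl_iff, Set.mem_Icc, not_and_or, not_le] at hx1
        have hx2' : x ≤ L := not_lt.1 hx2
        have : x < β := by
          rcases hx1 with h | h
          · linarith
          · linarith
        simp [paretoDensity, not_le.2 this])]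
  exact MeasureTheory.setIntegral_congr_fun measurableSet_Ioi fun x hx => by
    simp [paretoDensity, le_of_lt (lt_of_le_of_lt hL (Set.mem_Ioi.1 hx))]

-- the oscillatory bound for k ≥ 1
lemma pareto_osc_bound (α β L : ℝ) (hα : 0 < α) (hβ : 0 < β) (hL : β ≤ L) (k : ℕ) (hk : 1 ≤ k) :
    |∫ x in Set.Ioi L, (α * β ^ α * x ^ (-(α + 1))) * Real.cos (k * π * (x + L) / (2 * L))| ≤
      2 * α * β ^ α / (k * π * L ^ α) := by
  have hL0 : 0 < L := hβ.trans_le hL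
  have hk0 : (0:ℝ) < k := by exact_mod_cast hk
  set c : ℝ := k * π / (2 * L) with hc_def
  have hc : 0 < c := by positivity
  have hβα : (0:ℝ) < β ^ α := Real.rpow_pos_of_pos hβ α
  set θ : ℝ → ℝ := fun x => k * π * (x + L) / (2 * L) with hθ_def
  set A : ℝ → ℝ := fun x => (α * β ^ α * (-(α + 1)) / c) * (x ^ (-(α + 1) - 1) * Real.sin (θ x))
    with hA_def
  set B : ℝ → ℝ := fun x => (α * β ^ α * x ^ (-(α + 1))) * Real.cos (θ x) with hB_def
  set H : ℝ → ℝ := fun x => (α * β ^ α / c) * (x ^ (-(α + 1)) * Real.sin (θ x)) with hH_def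
  -- derivative of θ
  have hθd : ∀ x : ℝ, HasDerivAt θ c x := by
    intro x
    have h := (((hasDerivAt_id x).add_const L).const_mul ((k : ℝ) * π)).div_const (2 * L)
    rw [mul_one] at h
    exact h
  -- integrability of the rpow bounds
  have hexp1 : -(α + 1) < -1 := by linarith
  have hexp2 : -(α + 1) - 1 < -1 := by linarith
  have hmeasA : MeasureTheory.AEStronglyMeasurable A (volume.restrict (Set.Ioi L)) := by
    apply ContinuousOn.aestronglyMeasurable ?_ measurableSet_Ioi
    apply ContinuousOn.mul continuousOn_const
    apply ContinuousOn.mul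
    · exact fun x hx => ((Real.continuousAt_rpow_const x _
        (Or.inl (ne_of_gt (hL0.trans hx)))).continuousWithinAt)
    · exact (Real.continuous_sin.comp (by continuity)).continuousOn
  have hmeasB : MeasureTheory.AEStronglyMeasurable B (volume.restrict (Set.Ioi L)) := by
    apply ContinuousOn.aestronglyMeasurable ?_ measurableSet_Ioi
    apply ContinuousOn.mul
    · apply ContinuousOn.mul continuousOn_const
      exact fun x hx => ((Real.continuousAt_rpow_const x _
        (Or.inl (ne_of_gt (hL0.trans hx)))).continuousWithinAt)
    · exact (Real.continuous_cos.comp (by continuity)).continuousOn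
  have hintBnd1 : MeasureTheory.IntegrableOn (fun x : ℝ => α * β ^ α * x ^ (-(α + 1)))
      (Set.Ioi L) := (integrableOn_Ioi_rpow_of_lt hexp1 hL0).const_mul _
  have hintBnd2 : MeasureTheory.IntegrableOn
      (fun x : ℝ => (α * β ^ α * (α + 1) / c) * x ^ (-(α + 1) - 1)) (Set.Ioi L) :=
    (integrableOn_Ioi_rpow_of_lt hexp2 hL0).const_mul _
  have habsA : ∀ᵐ x ∂(volume.restrict (Set.Ioi L)),
      ‖A x‖ ≤ (α * β ^ α * (α + 1) / c) * x ^ (-(α + 1) - 1) := by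
    rw [MeasureTheory.ae_restrict_iff' measurableSet_Ioi]
    refine MeasureTheory.ae_of_all _ fun x hx => ?_
    have hx0 : 0 < x := hL0.trans hx
    have hrp : (0:ℝ) ≤ x ^ (-(α + 1) - 1) := (Real.rpow_pos_of_pos hx0 _).le
    have h2 : |x ^ (-(α + 1) - 1) * Real.sin (θ x)| ≤ x ^ (-(α + 1) - 1) := by
      rw [abs_mul, abs_of_nonneg hrp]
      exact mul_le_of_le_one_right hrp (Real.abs_sin_le_one _)
    have hCeq : |α * β ^ α * (-(α + 1)) / c| = α * β ^ α * (α + 1) / c := by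
      rw [abs_div, abs_of_pos hc, abs_mul, abs_neg,
        abs_of_pos (by positivity : (0:ℝ) < α * β ^ α),
        abs_of_pos (by linarith : (0:ℝ) < α + 1)]
    calc ‖A x‖ = |α * β ^ α * (-(α + 1)) / c| * |x ^ (-(α + 1) - 1) * Real.sin (θ x)| := by
          rw [Real.norm_eq_abs, abs_mul]
      _ ≤ (α * β ^ α * (α + 1) / c) * x ^ (-(α + 1) - 1) := by
          rw [hCeq]; exact mul_le_mul_of_nonneg_left h2 (by positivity)
  have habsB : ∀ᵐ x ∂(volume.restrict (Set.Ioi L)),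
      ‖B x‖ ≤ α * β ^ α * x ^ (-(α + 1)) := by
    rw [MeasureTheory.ae_restrict_iff' measurableSet_Ioi]
    refine MeasureTheory.ae_of_all _ fun x hx => ?_
    have hx0 : 0 < x := hL0.trans hx
    have hrp : (0:ℝ) ≤ x ^ (-(α + 1)) := (Real.rpow_pos_of_pos hx0 _).le
    calc ‖B x‖ = |α * β ^ α * x ^ (-(α + 1))| * |Real.cos (θ x)| := by
          rw [Real.norm_eq_abs, abs_mul]
      _ ≤ (α * β ^ α * x ^ (-(α + 1))) * 1 := by
          refine mul_le_mul (le_of_eq (abs_of_nonneg (by positivity)))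
            (Real.abs_cos_le_one _) (abs_nonneg _) (by positivity)
      _ = α * β ^ α * x ^ (-(α + 1)) := by ring
  have hintA : MeasureTheory.IntegrableOn A (Set.Ioi L) := hintBnd2.mono' hmeasA habsA
  have hintB : MeasureTheory.IntegrableOn B (Set.Ioi L) := hintBnd1.mono' hmeasB habsB
  -- derivative of H
  have hderiv : ∀ x ∈ Set.Ici L, HasDerivAt H (A x + B x) x := by
    intro x hx
    have hx0 : 0 < x := lt_of_lt_of_le hL0 hx
    have hpow : HasDerivAt (fun y : ℝ => y ^ (-(α + 1))) ((-(α + 1)) * x ^ (-(α + 1) - 1)) x :=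
      Real.hasDerivAt_rpow_const (Or.inl hx0.ne')
    have hsin : HasDerivAt (fun y => Real.sin (θ y)) (Real.cos (θ x) * c) x := (hθd x).sin
    have hmul := (hpow.mul hsin).const_mul (α * β ^ α / c)
    refine hmul.congr_deriv ?_
    simp only [A, B]
    field_simp
  -- limit of H at infinity
  have htop : Tendsto H atTop (nhds 0) := by
    apply squeeze_zero_norm' (a := fun x => (α * β ^ α / c) * x ^ (-(α + 1)))
    · filter_upwards [eventually_gt_atTop (0:ℝ)] with x hx0
      have hrp : (0:ℝ) ≤ x ^ (-(α + 1)) := (Real.rpow_pos_of_pos hx0 _).le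
      have h2 : |x ^ (-(α + 1)) * Real.sin (θ x)| ≤ x ^ (-(α + 1)) := by
        rw [abs_mul, abs_of_nonneg hrp]
        exact mul_le_of_le_one_right hrp (Real.abs_sin_le_one _)
      calc ‖H x‖ = |α * β ^ α / c| * |x ^ (-(α + 1)) * Real.sin (θ x)| := by
            rw [Real.norm_eq_abs, abs_mul]
        _ ≤ (α * β ^ α / c) * x ^ (-(α + 1)) := by
            rw [abs_of_pos (by positivity)]
            exact mul_le_mul_of_nonneg_left h2 (by positivity)
    · have := (tendsto_rpow_neg_atTop (by linarith : (0:ℝ) < α + 1)).const_mul (α * β ^ α / c)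
      simpa using this
  -- H L = 0
  have hHL : H L = 0 := by
    have : θ L = k * π := by
      simp only [θ]
      field_simp
      ring
    simp [H, this, Real.sin_nat_mul_pi]
  have hibp := MeasureTheory.integral_Ioi_of_hasDerivAt_of_tendsto
    ((hderiv L Set.self_mem_Ici).continuousAt.continuousWithinAt)
    (fun x hx => hderiv x (Set.mem_Ici.2 (le_of_lt (Set.mem_Ioi.1 hx)))) (hintA.add hintB) htop
  rw [MeasureTheory.integral_add hintA hintB, hHL, sub_zero] at hibp
  have hBeq : (∫ x in Set.Ioi L, B x) = -∫ x in Set.Ioi L, A x := by linarith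
  have hle : |∫ x in Set.Ioi L, A x| ≤
      ∫ x in Set.Ioi L, (α * β ^ α * (α + 1) / c) * x ^ (-(α + 1) - 1) :=
    MeasureTheory.norm_integral_le_of_norm_le hintBnd2 habsA
  have hval : (∫ x in Set.Ioi L, (α * β ^ α * (α + 1) / c) * x ^ (-(α + 1) - 1)) =
      2 * α * β ^ α / (k * π * L ^ α) := by
    rw [MeasureTheory.integral_const_mul, integral_Ioi_rpow_of_lt hexp2 hL0]
    have he : (-(α + 1) - 1 + 1) = -(α + 1) := by ring
    rw [he]
    have h1 : L ^ (-(α + 1)) = (L ^ α * L)⁻¹ := by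
      rw [Real.rpow_neg hL0.le, Real.rpow_add hL0, Real.rpow_one]
    rw [h1, hc_def, neg_div_neg_eq]
    have hLα : (0:ℝ) < L ^ α := Real.rpow_pos_of_pos hL0 α
    have h2 : α + 1 ≠ 0 := by positivity
    have h3 : (k:ℝ) * π ≠ 0 := by positivity
    field_simp
  calc |∫ x in Set.Ioi L, B x| = |∫ x in Set.Ioi L, A x| := by rw [hBeq, abs_neg]
    _ ≤ 2 * α * β ^ α / (k * π * L ^ α) := hval ▸ hle

lemma pareto_tail_integral (α β L : ℝ) (hα : 0 < α) (hβ : 0 < β) (hL : β ≤ L) :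
    (∫ x in Set.Ioi L, α * β ^ α * x ^ (-(α + 1))) = β ^ α * L ^ (-α) := by
  have hL0 : 0 < L := hβ.trans_le hL
  rw [MeasureTheory.integral_const_mul, integral_Ioi_rpow_of_lt (by linarith) hL0,
    show (-(α + 1) + 1) = -α by ring, neg_div_neg_eq]
  field_simp

theorem stmt_6 (α β : ℝ) (hα : 0 < α) (hβ : 0 < β) :
    (∀ L : ℝ, β ≤ L →
      cosB (paretoDensity α β) L ≤
        β ^ (2 * α) / L ^ (2 * α + 1) +
          (4 * α ^ 2 * β ^ (2 * α) / (π ^ 2 * L ^ (2 * α + 1))) *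
            ∑' k : ℕ, 1 / ((k : ℝ) + 1) ^ 2) ∧
    COSAdmissible (paretoDensity α β) := by
  have hβα : (0:ℝ) < β ^ α := Real.rpow_pos_of_pos hβ α
  have hsq : Summable (fun k : ℕ => 1 / ((k : ℝ) + 1) ^ 2) := by
    have h := summable_one_div_nat_pow.2 (le_refl 2)
    have h2 := (summable_nat_add_iff 1).2 h
    simpa using h2
  set S : ℝ := ∑' k : ℕ, 1 / ((k : ℝ) + 1) ^ 2 with hS_def
  have hmain : ∀ L : ℝ, β ≤ L →
      cosB (paretoDensity α β) L ≤
        β ^ (2 * α) / L ^ (2 * α + 1) +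
          (4 * α ^ 2 * β ^ (2 * α) / (π ^ 2 * L ^ (2 * α + 1))) * S := by
    intro L hL
    have hL0 : 0 < L := hβ.trans_le hL
    have hLα : (0:ℝ) < L ^ α := Real.rpow_pos_of_pos hL0 α
    set a : ℕ → ℝ := fun k => (1 / L) *
      |∫ x in (Set.Icc (-L) L)ᶜ, paretoDensity α β x * Real.cos (k * π * (x + L) / (2 * L))| ^ 2
      with ha_def
    have hb2 : β ^ (2 * α) = (β ^ α) ^ 2 := by
      rw [show (2:ℝ) * α = α + α by ring, Real.rpow_add hβ, sq]
    have hl2 : L ^ (2 * α + 1) = (L ^ α) ^ 2 * L := by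
      rw [show (2:ℝ) * α + 1 = α + α + 1 by ring, Real.rpow_add hL0, Real.rpow_add hL0,
        Real.rpow_one, sq]
    set C : ℝ := 4 * α ^ 2 * β ^ (2 * α) / (π ^ 2 * L ^ (2 * α + 1)) with hC_def
    have hC0 : 0 ≤ C := by
      have : (0:ℝ) < β ^ (2*α) := Real.rpow_pos_of_pos hβ _
      have : (0:ℝ) < L ^ (2*α+1) := Real.rpow_pos_of_pos hL0 _
      positivity
    have hI0 : (∫ x in (Set.Icc (-L) L)ᶜ,
        paretoDensity α β x * Real.cos ((0:ℕ) * π * (x + L) / (2 * L))) = β ^ α * L ^ (-α) := by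
      rw [pareto_intg_eq α β L hβ hL 0, ← pareto_tail_integral α β L hα hβ hL]
      refine MeasureTheory.setIntegral_congr_fun measurableSet_Ioi fun x hx => ?_
      norm_num
    have h0 : a 0 = β ^ (2 * α) / L ^ (2 * α + 1) := by
      simp only [ha_def]
      rw [hI0, abs_of_pos (by positivity : (0:ℝ) < β ^ α * L ^ (-α)),
        Real.rpow_neg hL0.le, hb2, hl2]
      field_simp
    have hterm : ∀ k : ℕ, a (k + 1) ≤ C * (1 / ((k : ℝ) + 1) ^ 2) := by
      intro k
      have hkk : (0:ℝ) < (k:ℝ) + 1 := by positivity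
      have hbd := pareto_osc_bound α β L hα hβ hL (k + 1) (Nat.le_add_left 1 k)
      rw [← pareto_intg_eq α β L hβ hL (k + 1)] at hbd
      have habs : |∫ x in (Set.Icc (-L) L)ᶜ,
          paretoDensity α β x * Real.cos ((k+1 : ℕ) * π * (x + L) / (2 * L))| ^ 2 ≤
          (2 * α * β ^ α / (((k:ℝ)+1) * π * L ^ α)) ^ 2 := by
        apply pow_le_pow_left₀ (abs_nonneg _) _ 2
        convert hbd using 3
        rfl
        push_cast; ring
      have heq : (1 / L) * (2 * α * β ^ α / (((k:ℝ)+1) * π * L ^ α)) ^ 2 =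
          C * (1 / ((k : ℝ) + 1) ^ 2) := by
        rw [hC_def, hb2, hl2]
        have hπ : (0:ℝ) < π := Real.pi_pos
        field_simp
        ring
      calc a (k + 1) ≤ (1 / L) * (2 * α * β ^ α / (((k:ℝ)+1) * π * L ^ α)) ^ 2 := by
            rw [ha_def]
            exact mul_le_mul_of_nonneg_left habs (by positivity)
        _ = C * (1 / ((k : ℝ) + 1) ^ 2) := heq
    have hanneg : ∀ k, 0 ≤ a k := fun k => by rw [ha_def]; positivity
    have hsum_shift : Summable (fun k : ℕ => a (k + 1)) :=
      Summable.of_nonneg_of_le (fun k => hanneg _) hterm (hsq.mul_left C)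
    have hsum : Summable a := (summable_nat_add_iff 1).1 hsum_shift
    have : cosB (paretoDensity α β) L = a 0 + ∑' k : ℕ, a (k + 1) := Summable.tsum_eq_zero_add hsum
    rw [this, h0]
    have htail : (∑' k : ℕ, a (k + 1)) ≤ C * S := by
      calc (∑' k : ℕ, a (k + 1)) ≤ ∑' k : ℕ, C * (1 / ((k : ℝ) + 1) ^ 2) :=
            Summable.tsum_le_tsum hterm hsum_shift (hsq.mul_left C)
        _ = C * S := tsum_mul_left
    linarith
  refine ⟨hmain, ?_⟩
  have hK : Tendsto (fun L : ℝ => (β ^ (2*α) + 4 * α ^ 2 * β ^ (2*α) * S / π ^ 2) / L ^ (2*α+1))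
      atTop (nhds 0) :=
    tendsto_const_nhds.div_atTop (tendsto_rpow_atTop (by linarith))
  apply tendsto_of_tendsto_of_tendsto_of_le_of_le' tendsto_const_nhds hK
  · filter_upwards [eventually_ge_atTop β] with L hL
    have hL0 : 0 < L := hβ.trans_le hL
    exact tsum_nonneg fun k => by positivity
  · filter_upwards [eventually_ge_atTop β] with L hL
    have h := hmain L hL
    have : β ^ (2*α) / L ^ (2*α+1) + (4 * α ^ 2 * β ^ (2*α) / (π ^ 2 * L ^ (2*α+1))) * S =
        (β ^ (2*α) + 4 * α ^ 2 * β ^ (2*α) * S / π ^ 2) / L ^ (2*α+1) := by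
      have hπ : (0:ℝ) < π := Real.pi_pos
      have hLp : (0:ℝ) < L ^ (2*α+1) := Real.rpow_pos_of_pos (hβ.trans_le hL) _
      field_simp
    linarith
end

section
/- Let f : ℝ → ℝ be square integrable with ∫_ℝ |x f(x)|² dx < ∞ and let L > 0. Then Σ′_{k=0}^∞ (1/L)·| ∫_L^∞ f(x)·cos(kπ(x+L)/(2L)) dx |² ≤ (π²/(6L²))·∫_L^∞ |x f(x)|² dx, where Σ′ indicates that the k = 0 summand is weighted by one-half. -/
open MeasureTheory Real Filter Topology intervalIntegral


lemma cosInt {c : ℝ} (hc : c ≠ 0) (d a b : ℝ) :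
    ∫ x in a..b, Real.cos (c * x + d) = (Real.sin (c * b + d) - Real.sin (c * a + d)) / c := by
  rw [intervalIntegral.integral_comp_mul_add Real.cos hc d, integral_cos]
  rw [smul_eq_mul]; ring

lemma cosIntL {L : ℝ} (hL : 0 < L) (m : ℤ) (n : ℕ) :
    ∫ x in ((2*n+1)*L)..((2*n+1)*L + 2*L), Real.cos (m * π * (x + L) / (2 * L)) =
      if m = 0 then 2 * L else 0 := by
  rcases eq_or_ne m 0 with hm | hm
  · simp [hm]
  · have hc : (m : ℝ) * π / (2 * L) ≠ 0 := by
      apply div_ne_zero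
      · exact mul_ne_zero (Int.cast_ne_zero.2 hm) Real.pi_ne_zero
      · positivity
    have key : ∀ x : ℝ, (m : ℝ) * π * (x + L) / (2 * L)
        = (m * π / (2 * L)) * x + m * π / 2 := by
      intro x; field_simp
    simp only [key]
    rw [cosInt hc]
    have e1 : (m : ℝ) * π / (2 * L) * ((2*n+1)*L) + m * π / 2 = ((m * (n+1) : ℤ) : ℝ) * π := by
      push_cast; field_simp; ring
    have e2 : (m : ℝ) * π / (2 * L) * ((2*n+1)*L + 2*L) + m * π / 2 = ((m * (n+2) : ℤ) : ℝ) * π := by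
      push_cast; field_simp; ring
    rw [e1, e2, Real.sin_int_mul_pi, Real.sin_int_mul_pi]
    simp [hm]

lemma orthoL {L : ℝ} (hL : 0 < L) (k j n : ℕ) :
    ∫ x in ((2*n+1)*L)..((2*n+1)*L + 2*L),
      Real.cos (k * π * (x + L) / (2 * L)) * Real.cos (j * π * (x + L) / (2 * L)) =
      if k = j then (if k = 0 then 2 * L else L) else 0 := by
  have hptw : ∀ x : ℝ, Real.cos (k * π * (x + L) / (2 * L)) * Real.cos (j * π * (x + L) / (2 * L))
      = (Real.cos (((k + j : ℤ)) * π * (x + L) / (2 * L))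
          + Real.cos (((k - j : ℤ)) * π * (x + L) / (2 * L))) / 2 := by
    intro x
    have h1 : ((k + j : ℤ) : ℝ) * π * (x + L) / (2 * L)
        = k * π * (x + L) / (2 * L) + j * π * (x + L) / (2 * L) := by push_cast; ring
    have h2 : ((k - j : ℤ) : ℝ) * π * (x + L) / (2 * L)
        = k * π * (x + L) / (2 * L) - j * π * (x + L) / (2 * L) := by push_cast; ring
    rw [h1, h2, Real.cos_add, Real.cos_sub]; ring
  simp only [hptw]
  have hic : ∀ m : ℤ, IntervalIntegrable
      (fun x => Real.cos ((m : ℝ) * π * (x + L) / (2 * L))) volume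
      ((2*n+1)*L) ((2*n+1)*L + 2*L) := by
    intro m
    exact (Real.continuous_cos.comp (by continuity)).intervalIntegrable _ _
  rw [show (fun x => (Real.cos (((k + j : ℤ)) * π * (x + L) / (2 * L))
          + Real.cos (((k - j : ℤ)) * π * (x + L) / (2 * L))) / 2)
      = fun x => (1/2 : ℝ) * (Real.cos (((k + j : ℤ)) * π * (x + L) / (2 * L))
          + Real.cos (((k - j : ℤ)) * π * (x + L) / (2 * L))) from by funext x; ring]
  rw [intervalIntegral.integral_const_mul, intervalIntegral.integral_add (hic _) (hic _),
    cosIntL hL, cosIntL hL]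
  rcases eq_or_ne k j with rfl | hkj
  · rcases eq_or_ne k 0 with rfl | hk0
    · norm_num; ring
    · have : (k + k : ℤ) ≠ 0 := by positivity
      simp [this, hk0]
  · have h1 : (k + j : ℤ) = 0 → False := by
      intro h
      have : k = 0 ∧ j = 0 := by omega
      exact hkj (this.1.trans this.2.symm)
    have h2 : (k - j : ℤ) ≠ 0 := by omega
    simp [h2, hkj]
    intro h; exact absurd h h1

lemma besselL {L : ℝ} (hL : 0 < L) (f : ℝ → ℝ) (hf : MemLp f 2 (volume : Measure ℝ))
    (n : ℕ) (S : Finset ℕ) :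
    ∑ k ∈ S, (if k = 0 then (1/2 : ℝ) else 1) *
      (∫ x in Set.Ioc ((2*n+1)*L) ((2*n+1)*L + 2*L),
        f x * Real.cos (k * π * (x + L) / (2 * L))) ^ 2
    ≤ L * ∫ x in Set.Ioc ((2*n+1)*L) ((2*n+1)*L + 2*L), (f x)^2 := by
  set a : ℝ := (2*n+1)*L with ha
  set μ : Measure ℝ := volume.restrict (Set.Ioc a (a + 2*L)) with hμ
  haveI : IsFiniteMeasure μ := ⟨by
    rw [hμ, Measure.restrict_apply MeasurableSet.univ, Set.univ_inter, Real.volume_Ioc]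
    exact ENNReal.ofReal_lt_top⟩
  have hcont : ∀ k : ℕ, Continuous (fun x : ℝ => Real.cos (k * π * (x + L) / (2 * L))) := by
    intro k; exact Real.continuous_cos.comp (by continuity)
  have hφmem : ∀ k : ℕ, MemLp (fun x : ℝ => Real.cos (k * π * (x + L) / (2 * L))) 2 μ := by
    intro k
    exact MemLp.of_bound ((hcont k).aestronglyMeasurable) 1
      (ae_of_all _ fun x => by simpa using Real.abs_cos_le_one _)
  have hfμ : MemLp f 2 μ := hf.restrict _
  have hab : a ≤ a + 2*L := by linarith
  -- inner products of the raw cos functions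
  have hinphi : ∀ k j : ℕ, (inner ℝ ((hφmem k).toLp _) ((hφmem j).toLp _) : ℝ) =
      if k = j then (if k = 0 then 2 * L else L) else 0 := by
    intro k j
    rw [MeasureTheory.L2.inner_def]
    have hae : (fun x => (inner ℝ (((hφmem k).toLp _ : Lp ℝ 2 μ) x)
          (((hφmem j).toLp _ : Lp ℝ 2 μ) x) : ℝ)) =ᵐ[μ]
        fun x => Real.cos (k * π * (x + L) / (2 * L)) * Real.cos (j * π * (x + L) / (2 * L)) := by
      filter_upwards [(hφmem k).coeFn_toLp, (hφmem j).coeFn_toLp] with x h1 h2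
      simp [h1, h2, RCLike.inner_apply]; ring
    rw [integral_congr_ae hae, hμ, ← intervalIntegral.integral_of_le hab, orthoL hL k j n]
  have hinf : ∀ k : ℕ, (inner ℝ ((hφmem k).toLp _) (hfμ.toLp f) : ℝ) =
      ∫ x in Set.Ioc a (a + 2*L), f x * Real.cos (k * π * (x + L) / (2 * L)) := by
    intro k
    rw [MeasureTheory.L2.inner_def]
    have hae : (fun x => (inner ℝ (((hφmem k).toLp _ : Lp ℝ 2 μ) x)
          ((hfμ.toLp f : Lp ℝ 2 μ) x) : ℝ)) =ᵐ[μ]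
        fun x => f x * Real.cos (k * π * (x + L) / (2 * L)) := by
      filter_upwards [(hφmem k).coeFn_toLp, hfμ.coeFn_toLp] with x h1 h2
      simp only [h1, h2, RCLike.inner_apply, conj_trivial]
    rw [integral_congr_ae hae, hμ]
  -- the normalized family
  set c : ℕ → ℝ := fun k => (Real.sqrt (if k = 0 then 2 * L else L))⁻¹ with hc
  have hLk : ∀ k : ℕ, 0 < (if k = 0 then 2 * L else L) := by
    intro k; split <;> linarith
  set v : ℕ → Lp ℝ 2 μ := fun k => c k • (hφmem k).toLp _ with hv
  have hortho : Orthonormal ℝ v := by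
    rw [orthonormal_iff_ite]
    intro k j
    rw [hv]
    simp only [real_inner_smul_left, real_inner_smul_right, hinphi k j]
    rcases eq_or_ne k j with rfl | hkj
    · simp only [if_pos rfl, hc]
      rw [← Real.sqrt_inv]
      have h0 : (0:ℝ) ≤ (if k = 0 then 2 * L else L)⁻¹ := by positivity
      rw [← Real.mul_self_sqrt h0]
      field_simp
      simp only [↓reduceIte]
      rw [Real.sq_sqrt (sq_nonneg _), Real.sq_sqrt (one_div_nonneg.2 (hLk k).le)]
      exact one_div_mul_cancel (hLk k).ne'
    · simp [hkj]
  have key := hortho.sum_inner_products_le (hfμ.toLp f) (s := S)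
  have hnorm : ‖hfμ.toLp f‖ ^ 2 = ∫ x in Set.Ioc a (a + 2*L), (f x)^2 := by
    rw [← real_inner_self_eq_norm_sq, MeasureTheory.L2.inner_def]
    have hae : (fun x => (inner ℝ ((hfμ.toLp f : Lp ℝ 2 μ) x)
          ((hfμ.toLp f : Lp ℝ 2 μ) x) : ℝ)) =ᵐ[μ] fun x => (f x)^2 := by
      filter_upwards [hfμ.coeFn_toLp] with x h1
      simp [h1, RCLike.inner_apply, sq]
    rw [integral_congr_ae hae, hμ]
  rw [hnorm] at key
  calc ∑ k ∈ S, (if k = 0 then (1/2 : ℝ) else 1) *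
      (∫ x in Set.Ioc a (a + 2*L), f x * Real.cos (k * π * (x + L) / (2 * L))) ^ 2
      = L * ∑ k ∈ S, ‖(inner ℝ (v k) (hfμ.toLp f) : ℝ)‖ ^ 2 := by
        rw [Finset.mul_sum]
        refine Finset.sum_congr rfl fun k _ => ?_
        rw [hv]
        simp only [real_inner_smul_left, hinf k, norm_mul, mul_pow, Real.norm_eq_abs, sq_abs]
        have hck : (c k)^2 = (if k = 0 then 2*L else L)⁻¹ := by
          rw [hc, inv_pow, Real.sq_sqrt (hLk k).le]
        rw [hck]
        rcases eq_or_ne k 0 with rfl | hk0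
        · simp only [if_pos rfl]
          field_simp
          simp only [↓reduceIte, Real.cos_zero, mul_one, one_mul]
          ring
        · simp only [if_neg hk0]
          field_simp
    _ ≤ L * ∫ x in Set.Ioc a (a + 2*L), (f x)^2 := by
        exact mul_le_mul_of_nonneg_left key (le_of_lt hL)

section Main

variable {f : ℝ → ℝ} {L : ℝ}

-- the intervals
noncomputable def Jset (L : ℝ) (n : ℕ) : Set ℝ := Set.Ioc ((2*n+1)*L) ((2*n+1)*L + 2*L)

lemma Jmeas (L : ℝ) (n : ℕ) : MeasurableSet (Jset L n) := measurableSet_Ioc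

lemma Jdisj (hL : 0 < L) : Pairwise (Function.onFun Disjoint (Jset L)) := by
  intro n m hnm
  have key : ∀ p q : ℕ, p < q → Disjoint (Jset L p) (Jset L q) := by
    intro p q hpq
    rw [Set.disjoint_left]
    rintro x ⟨h1, h2⟩ ⟨h3, h4⟩
    have hpq' : (p:ℝ) + 1 ≤ q := by exact_mod_cast hpq
    have : (2*(p:ℝ)+1)*L + 2*L ≤ (2*(q:ℝ)+1)*L := by nlinarith
    linarith
  rcases hnm.lt_or_gt with h | h
  · exact key n m h
  · exact (key m n h).symm

lemma Junion (hL : 0 < L) : (⋃ n, Jset L n) = Set.Ioi L := by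
  classical
  ext x
  simp only [Set.mem_iUnion, Jset, Set.mem_Ioc, Set.mem_Ioi]
  constructor
  · rintro ⟨n, h1, h2⟩
    have : L ≤ (2*(n:ℝ)+1)*L := by nlinarith [(Nat.cast_nonneg n : (0:ℝ) ≤ n)]
    linarith
  · intro hx
    obtain ⟨m, hm⟩ := exists_nat_ge (x / L)
    have hex : ∃ n : ℕ, x ≤ (2*(n:ℝ)+1)*L + 2*L := by
      refine ⟨m, ?_⟩
      rw [div_le_iff₀ hL] at hm
      nlinarith [(Nat.cast_nonneg m : (0:ℝ) ≤ m)]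
    have hN := Nat.find_spec hex
    refine ⟨Nat.find hex, ?_, hN⟩
    rcases Nat.eq_zero_or_pos (Nat.find hex) with h0 | hpos
    · rw [h0]
      push_cast
      linarith
    · obtain ⟨p, hp⟩ : ∃ p, Nat.find hex = p + 1 := ⟨Nat.find hex - 1, by omega⟩
      have hmin := Nat.find_min hex (m := p) (by omega)
      rw [not_le] at hmin
      rw [hp]
      push_cast
      push_cast at hmin
      linarith

lemma Jsub (hL : 0 < L) (n : ℕ) : Jset L n ⊆ Set.Ioi L := by
  rw [← Junion hL]; exact Set.subset_iUnion (Jset L) n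

-- integrability of f * cos on Ioi L
lemma fphi_int (hf : MemLp f 2 (volume : Measure ℝ))
    (hxf : MemLp (fun x => x * f x) 2 (volume : Measure ℝ)) (hL : 0 < L) (k : ℕ) :
    IntegrableOn (fun x => f x * Real.cos (k * π * (x + L) / (2 * L))) (Set.Ioi L) volume := by
  have hcont : Continuous (fun x : ℝ => Real.cos (k * π * (x + L) / (2 * L))) :=
    Real.continuous_cos.comp (by continuity)
  have hinv2 : IntegrableOn (fun x : ℝ => (x⁻¹)^2) (Set.Ioi L) volume := by
    have h0 := integrableOn_Ioi_rpow_of_lt (show (-2:ℝ) < -1 by norm_num) hL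
    apply h0.congr_fun _ measurableSet_Ioi
    intro x hx
    have hx0 : (0:ℝ) < x := lt_trans hL hx
    have h2 : x ^ (-2:ℝ) = (x ^ (2:ℕ))⁻¹ := by
      rw [show (-2:ℝ) = -((2:ℕ):ℝ) by norm_num, Real.rpow_neg hx0.le, Real.rpow_natCast]
    simp only [h2, inv_pow]
  have hinvmem : MemLp (fun x : ℝ => x⁻¹) 2 (volume.restrict (Set.Ioi L)) := by
    rw [memLp_two_iff_integrable_sq (measurable_inv.aestronglyMeasurable)]
    exact hinv2
  have hφx : MemLp (fun x : ℝ => Real.cos (k * π * (x + L) / (2 * L)) * x⁻¹) 2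
      (volume.restrict (Set.Ioi L)) := by
    apply MemLp.of_le hinvmem
      ((hcont.measurable.mul measurable_inv).aestronglyMeasurable)
    refine ae_of_all _ fun x => ?_
    rw [Pi.mul_apply, norm_mul]
    exact mul_le_of_le_one_left (norm_nonneg _) (by simpa using Real.abs_cos_le_one _)
  have hsmul : MemLp ((fun x : ℝ => Real.cos (k * π * (x + L) / (2 * L)) * x⁻¹) •
      (fun x : ℝ => x * f x)) 1 (volume.restrict (Set.Ioi L)) := by
    apply MemLp.smul (hxf.restrict _) hφx
  rw [memLp_one_iff_integrable] at hsmul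
  apply hsmul.congr
  filter_upwards [ae_restrict_mem measurableSet_Ioi] with x hx
  have hx0 : x ≠ 0 := ne_of_gt (lt_trans hL hx)
  simp only [Pi.smul_apply', smul_eq_mul]
  field_simp

theorem stmt_11 (f : ℝ → ℝ) (hf : MemLp f 2 (volume : Measure ℝ))
    (hxf : MemLp (fun x => x * f x) 2 (volume : Measure ℝ))
    (L : ℝ) (hL : 0 < L) :
    ∑' k : ℕ, (if k = 0 then (1 / 2 : ℝ) else 1) * ((1 / L) *
        |∫ x in Set.Ioi L, f x * Real.cos (k * π * (x + L) / (2 * L))| ^ 2) ≤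
      (π ^ 2 / (6 * L ^ 2)) * ∫ x in Set.Ioi L, |x * f x| ^ 2 := by
  classical
  have hxf2 : IntegrableOn (fun x => (x * f x)^2) (Set.Ioi L) volume :=
    hxf.integrable_sq.integrableOn
  have hf2 : IntegrableOn (fun x => (f x)^2) (Set.Ioi L) volume :=
    hf.integrable_sq.integrableOn
  have hD : HasSum (fun n => ∫ x in Jset L n, (x * f x)^2)
      (∫ x in Set.Ioi L, (x * f x)^2) := by
    have := hasSum_integral_iUnion (μ := volume) (Jmeas L) (Jdisj hL)
      ((Junion hL).symm ▸ hxf2)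
    rwa [Junion hL] at this
  have hDnn : ∀ n, 0 ≤ ∫ x in Jset L n, (x * f x)^2 :=
    fun n => setIntegral_nonneg (Jmeas L n) (fun x _ => sq_nonneg _)
  have hf2nn : ∀ n, 0 ≤ ∫ x in Jset L n, (f x)^2 :=
    fun n => setIntegral_nonneg (Jmeas L n) (fun x _ => sq_nonneg _)
  have hBessel : ∀ (n : ℕ) (S : Finset ℕ),
      ∑ k ∈ S, (if k = 0 then (1/2 : ℝ) else 1) *
        (∫ x in Jset L n, f x * Real.cos (k * π * (x + L) / (2 * L))) ^ 2
      ≤ L * ∫ x in Jset L n, (f x)^2 := fun n S => besselL hL f hf n S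
  have hb2 : ∀ (n : ℕ) (k : ℕ), (∫ x in Jset L n, f x * Real.cos (k * π * (x + L) / (2 * L)))^2
      ≤ 2 * L * ∫ x in Jset L n, (f x)^2 := by
    intro n k
    have h := hBessel n {k}
    rw [Finset.sum_singleton] at h
    have h0 : (0:ℝ) ≤ L * ∫ x in Jset L n, (f x)^2 := mul_nonneg hL.le (hf2nn n)
    rcases eq_or_ne k 0 with rfl | hk
    · simp only [Nat.cast_zero, zero_mul, zero_div, Real.cos_zero, mul_one] at h ⊢
      rw [if_pos trivial] at h
      linarith
    · simp only [if_neg hk, one_mul] at h; linarith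
  have hJcomp : ∀ n : ℕ, L * ((n:ℝ)+1)^2 * ∫ x in Jset L n, (f x)^2
      ≤ (1/L) * ∫ x in Jset L n, (x * f x)^2 := by
    intro n
    have hmono : ∫ x in Jset L n, (L * ((n:ℝ)+1)^2) * (f x)^2
        ≤ ∫ x in Jset L n, (1/L) * (x * f x)^2 := by
      apply setIntegral_mono_on
      · exact ((hf2.mono_set (Jsub hL n))).const_mul _
      · exact ((hxf2.mono_set (Jsub hL n))).const_mul _
      · exact Jmeas L n
      · intro x hx
        obtain ⟨h1, h2⟩ := hx
        have hxge : ((n:ℝ)+1) * L ≤ x := by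
          nlinarith [(Nat.cast_nonneg n : (0:ℝ) ≤ n)]
        have key : ((((n:ℝ)+1)) * L)^2 ≤ x^2 :=
          pow_le_pow_left₀ (by positivity) hxge 2
        have h3 : (1/L) * (((((n:ℝ)+1)) * L)^2 * (f x)^2) ≤ (1/L) * (x^2 * (f x)^2) :=
          mul_le_mul_of_nonneg_left
            (mul_le_mul_of_nonneg_right key (sq_nonneg _)) (by positivity)
        calc (L * ((n:ℝ)+1)^2) * (f x)^2
            = (1/L) * (((((n:ℝ)+1)) * L)^2 * (f x)^2) := by field_simp
          _ ≤ (1/L) * (x^2 * (f x)^2) := h3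
          _ = (1/L) * (x * f x)^2 := by ring
    rwa [MeasureTheory.integral_const_mul, MeasureTheory.integral_const_mul] at hmono
  have hTle : ∀ (k : ℕ) (n : ℕ), ((n:ℝ)+1)^2 *
      (∫ x in Jset L n, f x * Real.cos (k * π * (x + L) / (2 * L)))^2
      ≤ (2/L) * ∫ x in Jset L n, (x * f x)^2 := by
    intro k n
    calc ((n:ℝ)+1)^2 * (∫ x in Jset L n, f x * Real.cos (k * π * (x + L) / (2 * L)))^2
        ≤ ((n:ℝ)+1)^2 * (2 * L * ∫ x in Jset L n, (f x)^2) :=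
          mul_le_mul_of_nonneg_left (hb2 n k) (by positivity)
      _ = 2 * (L * ((n:ℝ)+1)^2 * ∫ x in Jset L n, (f x)^2) := by ring
      _ ≤ 2 * ((1/L) * ∫ x in Jset L n, (x * f x)^2) := by linarith [hJcomp n]
      _ = (2/L) * ∫ x in Jset L n, (x * f x)^2 := by ring
  have hTsummable : ∀ k : ℕ, Summable (fun n : ℕ =>
      ((n:ℝ)+1)^2 * (∫ x in Jset L n, f x * Real.cos (k * π * (x + L) / (2 * L)))^2) :=
    fun k => Summable.of_nonneg_of_le (fun n => by positivity) (hTle k)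
      (hD.summable.mul_left _)
  have hbasel : ∀ s : Finset ℕ, ∑ n ∈ s, ((1:ℝ)/((n:ℝ)+1))^2 ≤ π^2/6 := by
    intro s
    calc ∑ n ∈ s, ((1:ℝ)/((n:ℝ)+1))^2
        = ∑ m ∈ s.map ⟨Nat.succ, Nat.succ_injective⟩, (1:ℝ)/(m:ℝ)^2 := by
          rw [Finset.sum_map]
          refine Finset.sum_congr rfl fun n _ => ?_
          simp only [Function.Embedding.coeFn_mk, Nat.succ_eq_add_one]
          rw [div_pow, one_pow]
          push_cast
          ring
      _ ≤ π^2/6 := sum_le_hasSum _ (fun m _ => by positivity) hasSum_zeta_two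
  have hCS : ∀ k : ℕ, (∫ x in Set.Ioi L, f x * Real.cos (k * π * (x + L) / (2 * L)))^2
      ≤ (π^2/6) * ∑' n : ℕ, ((n:ℝ)+1)^2 *
        (∫ x in Jset L n, f x * Real.cos (k * π * (x + L) / (2 * L)))^2 := by
    intro k
    have hAsum : HasSum (fun n => ∫ x in Jset L n, f x * Real.cos (k * π * (x + L) / (2 * L)))
        (∫ x in Set.Ioi L, f x * Real.cos (k * π * (x + L) / (2 * L))) := by
      have := hasSum_integral_iUnion (μ := volume) (Jmeas L) (Jdisj hL)
        ((Junion hL).symm ▸ fphi_int hf hxf hL k)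
      rwa [Junion hL] at this
    have ht0 : Tendsto (fun s : Finset ℕ =>
        ∑ n ∈ s, ∫ x in Jset L n, f x * Real.cos (k * π * (x + L) / (2 * L))) atTop
        (𝓝 (∫ x in Set.Ioi L, f x * Real.cos (k * π * (x + L) / (2 * L)))) := hAsum
    have ht := ht0.pow 2
    refine le_of_tendsto ht (Eventually.of_forall fun s => ?_)
    have hcs := Finset.sum_mul_sq_le_sq_mul_sq s (fun n => (1:ℝ)/((n:ℝ)+1))
      (fun n => (((n:ℝ)+1)) * ∫ x in Jset L n, f x * Real.cos (k * π * (x + L) / (2 * L)))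
    have heq : ∑ n ∈ s, ((1:ℝ)/((n:ℝ)+1)) *
        ((((n:ℝ)+1)) * ∫ x in Jset L n, f x * Real.cos (k * π * (x + L) / (2 * L)))
        = ∑ n ∈ s, ∫ x in Jset L n, f x * Real.cos (k * π * (x + L) / (2 * L)) := by
      refine Finset.sum_congr rfl fun n _ => ?_
      have hne : ((n:ℝ)+1) ≠ 0 := by positivity
      field_simp
    rw [heq] at hcs
    refine hcs.trans ?_
    have hsnd : ∑ n ∈ s, ((((n:ℝ)+1)) *
        ∫ x in Jset L n, f x * Real.cos (k * π * (x + L) / (2 * L)))^2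
        ≤ ∑' n : ℕ, ((n:ℝ)+1)^2 *
          (∫ x in Jset L n, f x * Real.cos (k * π * (x + L) / (2 * L)))^2 := by
      have hrw : ∀ n : ℕ, ((((n:ℝ)+1)) *
          ∫ x in Jset L n, f x * Real.cos (k * π * (x + L) / (2 * L)))^2
          = ((n:ℝ)+1)^2 * (∫ x in Jset L n, f x * Real.cos (k * π * (x + L) / (2 * L)))^2 :=
        fun n => mul_pow _ _ _
      rw [Finset.sum_congr rfl fun n _ => hrw n]
      exact Summable.sum_le_tsum s (fun n _ => by positivity) (hTsummable k)
    exact mul_le_mul (hbasel s) hsnd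
      (Finset.sum_nonneg fun n _ => sq_nonneg _) (by positivity)
  -- final assembly
  have hRHSnn : 0 ≤ (π^2/(6*L^2)) * ∫ x in Set.Ioi L, |x * f x|^2 :=
    mul_nonneg (by positivity) (setIntegral_nonneg measurableSet_Ioi fun x _ => by positivity)
  refine tsum_le_of_sum_le' hRHSnn fun S => ?_
  have habs : ∫ x in Set.Ioi L, |x * f x|^2 = ∫ x in Set.Ioi L, (x * f x)^2 := by
    refine integral_congr_ae (ae_of_all _ fun x => ?_)
    simp only [sq_abs]
  rw [habs]
  have hεnn : ∀ k : ℕ, 0 ≤ (if k = 0 then (1/2:ℝ) else 1) := by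
    intro k; split <;> norm_num
  have hpoint : ∀ n : ℕ, ∑ k ∈ S, (if k = 0 then (1/2:ℝ) else 1) *
      (((n:ℝ)+1)^2 * (∫ x in Jset L n, f x * Real.cos (k * π * (x + L) / (2 * L)))^2)
      ≤ (1/L) * ∫ x in Jset L n, (x * f x)^2 := by
    intro n
    have h1 : ∑ k ∈ S, (if k = 0 then (1/2:ℝ) else 1) *
        (((n:ℝ)+1)^2 * (∫ x in Jset L n, f x * Real.cos (k * π * (x + L) / (2 * L)))^2)
        = ((n:ℝ)+1)^2 * ∑ k ∈ S, (if k = 0 then (1/2:ℝ) else 1) *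
          (∫ x in Jset L n, f x * Real.cos (k * π * (x + L) / (2 * L)))^2 := by
      rw [Finset.mul_sum]
      exact Finset.sum_congr rfl fun k _ => by ring
    rw [h1]
    calc ((n:ℝ)+1)^2 * ∑ k ∈ S, (if k = 0 then (1/2:ℝ) else 1) *
          (∫ x in Jset L n, f x * Real.cos (k * π * (x + L) / (2 * L)))^2
        ≤ ((n:ℝ)+1)^2 * (L * ∫ x in Jset L n, (f x)^2) :=
          mul_le_mul_of_nonneg_left (hBessel n S) (by positivity)
      _ = L * ((n:ℝ)+1)^2 * ∫ x in Jset L n, (f x)^2 := by ring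
      _ ≤ (1/L) * ∫ x in Jset L n, (x * f x)^2 := hJcomp n
  calc ∑ k ∈ S, (if k = 0 then (1/2:ℝ) else 1) * ((1/L) *
        |∫ x in Set.Ioi L, f x * Real.cos (k * π * (x + L) / (2 * L))|^2)
      ≤ ∑ k ∈ S, (π^2/(6*L)) * ((if k = 0 then (1/2:ℝ) else 1) *
        ∑' n : ℕ, ((n:ℝ)+1)^2 *
          (∫ x in Jset L n, f x * Real.cos (k * π * (x + L) / (2 * L)))^2) := by
        refine Finset.sum_le_sum fun k _ => ?_
        rw [sq_abs]
        have h2 := hCS k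
        have h3 : (if k = 0 then (1/2:ℝ) else 1) * ((1/L) *
            (∫ x in Set.Ioi L, f x * Real.cos (k * π * (x + L) / (2 * L)))^2)
            ≤ (if k = 0 then (1/2:ℝ) else 1) * ((1/L) * ((π^2/6) *
              ∑' n : ℕ, ((n:ℝ)+1)^2 *
                (∫ x in Jset L n, f x * Real.cos (k * π * (x + L) / (2 * L)))^2)) := by
          apply mul_le_mul_of_nonneg_left _ (hεnn k)
          exact mul_le_mul_of_nonneg_left h2 (by positivity)
        refine h3.trans (le_of_eq ?_)
        ring
    _ = (π^2/(6*L)) * ∑ k ∈ S, (if k = 0 then (1/2:ℝ) else 1) *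
        ∑' n : ℕ, ((n:ℝ)+1)^2 *
          (∫ x in Jset L n, f x * Real.cos (k * π * (x + L) / (2 * L)))^2 :=
        (Finset.mul_sum _ _ _).symm
    _ ≤ (π^2/(6*L)) * ((1/L) * ∫ x in Set.Ioi L, (x * f x)^2) := by
        refine mul_le_mul_of_nonneg_left ?_ (by positivity)
        calc ∑ k ∈ S, (if k = 0 then (1/2:ℝ) else 1) *
              ∑' n : ℕ, ((n:ℝ)+1)^2 *
                (∫ x in Jset L n, f x * Real.cos (k * π * (x + L) / (2 * L)))^2
            = ∑ k ∈ S, ∑' n : ℕ, (if k = 0 then (1/2:ℝ) else 1) *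
              (((n:ℝ)+1)^2 *
                (∫ x in Jset L n, f x * Real.cos (k * π * (x + L) / (2 * L)))^2) := by
              refine Finset.sum_congr rfl fun k _ => ?_
              rw [tsum_mul_left]
          _ = ∑' n : ℕ, ∑ k ∈ S, (if k = 0 then (1/2:ℝ) else 1) *
              (((n:ℝ)+1)^2 *
                (∫ x in Jset L n, f x * Real.cos (k * π * (x + L) / (2 * L)))^2) :=
              (Summable.tsum_finsetSum (fun k _ => (hTsummable k).mul_left _)).symm
          _ ≤ ∑' n : ℕ, (1/L) * ∫ x in Jset L n, (x * f x)^2 := by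
              refine Summable.tsum_le_tsum hpoint ?_ (hD.summable.mul_left _)
              apply Summable.of_nonneg_of_le ?_ hpoint (hD.summable.mul_left _)
              intro n
              exact Finset.sum_nonneg fun k _ => mul_nonneg (hεnn k) (by positivity)
          _ = (1/L) * ∫ x in Set.Ioi L, (x * f x)^2 := by
              rw [tsum_mul_left, hD.tsum_eq]
    _ = (π^2/(6*L^2)) * ∫ x in Set.Ioi L, (x * f x)^2 := by
        field_simp
end Main
end
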